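/- arXiv:2503.10425 — 10 statements merged into one kernel-verified Lean document; each statement's English description precedes it below -/
import Mathlib

section
/- Let G be a finite group, p a prime, P a Sylow p-subgroup of G, and x an element of P. If x is picky (i.e., x belongs to a unique Sylow p-subgroup of G), then the normalizer of ⟨x⟩ in G is contained in the normalizer of P in G. -/
theorem stmt_0 {G : Type*} [Group G] [Fintype G] {p : ℕ} (hp : p.Prime)
    (P : Sylow p G) (x : G) (hx : x ∈ P)
    (hpicky : ∀ Q : Sylow p G, x ∈ Q → Q = P) :
    Subgroup.normalizer ((Subgroup.zpowers x : Subgroup G) : Set G) ≤ Subgroup.normalizer ((P : Subgroup G) : Set G) := by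
  intro g hg
  apply Sylow.smul_eq_iff_mem_normalizer.mp
  apply hpicky
  show x ∈ ((g • P : Sylow p G) : Subgroup G)
  rw [Sylow.smul_def, Sylow.pointwise_smul_def, Subgroup.mem_pointwise_smul_iff_inv_smul_mem]
  have hg' := Subgroup.mem_normalizer_iff.mp (inv_mem hg)
  have h1 : g⁻¹ * x * g ∈ Subgroup.zpowers x := by
    simpa using (hg' x).mp (Subgroup.mem_zpowers x)
  have := Subgroup.zpowers_le.mpr hx h1
  simpa [MulAut.smul_def, mul_assoc] using this
end

section
/- Let G be a finite group, p a prime, P a Sylow p-subgroup of G, and x ∈ P. If both P and the centralizer of x in G are abelian, then x belongs to a unique Sylow p-subgroup of G. -/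
open Pointwise


theorem stmt_1 {G : Type*} [Group G] [Fintype G] {p : ℕ} (hp : p.Prime)
    (P : Sylow p G) (x : G) (hx : x ∈ P)
    (hP : IsMulCommutative (P : Subgroup G))
    (hC : IsMulCommutative (Subgroup.centralizer {x})) :
    ∀ Q : Sylow p G, x ∈ Q → Q = P := by
  intro Q hxQ
  haveI := Fact.mk hp
  haveI := hP
  haveI := hC
  obtain ⟨g, hg⟩ := MulAction.exists_smul_eq G P Q
  haveI hQ : IsMulCommutative (Q : Subgroup G) := by
    rw [← hg]
    show IsMulCommutative ((MulAut.conj g • (P : Subgroup G) : Subgroup G))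
    rw [Subgroup.pointwise_smul_def]
    exact Subgroup.map_isMulCommutative (H := (P : Subgroup G)) _
  have hPC : (P : Subgroup G) ≤ Subgroup.centralizer {x} := fun y hy =>
    Subgroup.mem_centralizer_singleton_iff.mpr
      (Subgroup.mul_comm_of_mem_isMulCommutative (H := (P : Subgroup G)) hy hx)
  have hQC : (Q : Subgroup G) ≤ Subgroup.centralizer {x} := fun y hy =>
    Subgroup.mem_centralizer_singleton_iff.mpr
      (Subgroup.mul_comm_of_mem_isMulCommutative (H := (Q : Subgroup G)) hy hxQ)
  obtain ⟨c, hc⟩ :=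
    MulAction.exists_smul_eq (Subgroup.centralizer ({x} : Set G))
      (Q.subtype hQC) (P.subtype hPC)
  haveI : ((Q.subtype hQC : Subgroup (Subgroup.centralizer ({x} : Set G)))).Normal :=
    inferInstance
  rw [Sylow.smul_eq_of_normal] at hc
  exact Sylow.subtype_injective hc
end

section
/- Let G be a finite group, p a prime, and N a normal p-subgroup of G. A p-element x ∈ G belongs to a unique Sylow p-subgroup of G if and only if the coset xN belongs to a unique Sylow p-subgroup of G/N. -/
theorem stmt_4 {G : Type*} [Group G] [Fintype G] {p : ℕ} (hp : p.Prime)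
    (N : Subgroup G) [N.Normal] (hN : IsPGroup p N)
    (x : G) (hx : ∃ k : ℕ, orderOf x = p ^ k) :
    (∃! P : Sylow p G, x ∈ P) ↔
      ∃! Q : Sylow p (G ⧸ N), (x : G ⧸ N) ∈ Q := by
  haveI : Fact p.Prime := ⟨hp⟩
  set f := QuotientGroup.mk' N with hf_def
  have hf : Function.Surjective f := QuotientGroup.mk'_surjective N
  -- N is contained in every Sylow p-subgroup
  have hNle : ∀ P : Sylow p G, N ≤ (P : Subgroup G) := by
    intro P
    have h := hN.to_sup_of_normal_left P.2
    have := P.3 h le_sup_right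
    exact le_sup_left.trans this.le
  -- membership transfer
  have hmem : ∀ (P : Sylow p G), x ∈ P ↔ (x : G ⧸ N) ∈ (P : Subgroup G).map f := by
    intro P
    constructor
    · intro h
      exact ⟨x, h, rfl⟩
    · rintro ⟨y, hy, hyx⟩
      have : y⁻¹ * x ∈ N := by
        rw [← QuotientGroup.ker_mk' N, MonoidHom.mem_ker, map_mul, map_inv,
          inv_mul_eq_one]
        exact hyx
      have hx' : x = y * (y⁻¹ * x) := by group
      rw [hx']
      exact mul_mem hy (hNle P this)
  -- injectivity of P ↦ P.map f
  have hinj : ∀ P Q : Sylow p G,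
      (P : Subgroup G).map f = (Q : Subgroup G).map f → P = Q := by
    intro P Q h
    have hP : ((P : Subgroup G).map f).comap f = P :=
      Subgroup.comap_map_eq_self (by rw [QuotientGroup.ker_mk' N]; exact hNle P)
    have hQ : ((Q : Subgroup G).map f).comap f = Q :=
      Subgroup.comap_map_eq_self (by rw [QuotientGroup.ker_mk' N]; exact hNle Q)
    ext g
    rw [← hP, ← hQ, h]
  have coe_ms : ∀ P : Sylow p G,
      ((P.mapSurjective hf : Sylow p (G ⧸ N)) : Subgroup (G ⧸ N))
        = (P : Subgroup G).map f := fun P => Sylow.coe_mapSurjective hf P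
  constructor
  · rintro ⟨P, hxP, hP⟩
    refine ⟨P.mapSurjective hf, ?_, ?_⟩
    · show (x : G ⧸ N) ∈ (P.mapSurjective hf : Subgroup (G ⧸ N))
      rw [coe_ms]
      exact (hmem P).mp hxP
    · intro Q hQ
      obtain ⟨R, rfl⟩ := Sylow.mapSurjective_surjective hf p Q
      have : R = P := hP R ((hmem R).mpr (by rw [← coe_ms]; exact hQ))
      rw [this]
  · rintro ⟨Q, hxQ, hQ⟩
    obtain ⟨P, rfl⟩ := Sylow.mapSurjective_surjective hf p Q
    refine ⟨P, (hmem P).mpr (by rw [← coe_ms]; exact hxQ), ?_⟩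
    intro R hR
    have : R.mapSurjective hf = P.mapSurjective hf :=
      hQ _ (show (x : G ⧸ N) ∈ (R.mapSurjective hf : Subgroup (G ⧸ N)) by rw [coe_ms]; exact (hmem R).mp hR)
    exact hinj R P (by rw [← coe_ms, ← coe_ms, this])
end

section
/- Let G be a finite group, p a prime, and N a central subgroup of G of order prime to p. A p-element x ∈ G belongs to a unique Sylow p-subgroup of G if and only if xN belongs to a unique Sylow p-subgroup of G/N. -/
open Pointwise

section Aux

variable {G : Type*} [Group G] [Fintype G] {p : ℕ}

/-- For a `p`-element `g` and a Sylow `p`-subgroup `P`, membership of `g` in `P` can be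
tested in the quotient by a central subgroup of order prime to `p`. -/
lemma aux_mem (hp : p.Prime) (N : Subgroup G) (hNc : N ≤ Subgroup.center G)
    (hNp : ¬ p ∣ Nat.card N) [N.Normal] (P : Sylow p G) {g : G}
    (hg : ∃ k : ℕ, g ^ p ^ k = 1) :
    g ∈ P ↔ ((g : G ⧸ N) ∈ P.1.map (QuotientGroup.mk' N)) := by
  constructor
  · intro h
    exact Subgroup.mem_map_of_mem _ h
  · intro h
    have hcomap : g ∈ Subgroup.comap (QuotientGroup.mk' N) (P.1.map (QuotientGroup.mk' N)) := h
    rw [Subgroup.comap_map_eq, QuotientGroup.ker_mk'] at hcomap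
    -- g ∈ P ⊔ N, so g = y * n with y ∈ P, n ∈ N
    have : g ∈ ((P.1 : Set G) * (N : Set G)) := by
      rw [← Subgroup.mul_normal]; exact hcomap
    obtain ⟨y, hy, n, hn, rfl⟩ := this
    obtain ⟨k, hk⟩ := hg
    -- n commutes with everything
    have hcomm : ∀ a : G, a * n = n * a := fun a => (Subgroup.mem_center_iff.mp (hNc hn)) a
    have hc : Commute y n := hcomm y
    have hpow : (y * n) ^ p ^ k = y ^ p ^ k * n ^ p ^ k := hc.mul_pow _
    rw [hpow] at hk
    -- n ^ p ^ k ∈ P ∩ N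
    have hnP : n ^ p ^ k ∈ P := by
      have : n ^ p ^ k = (y ^ p ^ k)⁻¹ := by
        rw [eq_inv_iff_mul_eq_one, ← hc.pow_pow]; exact hk
      rw [this]
      exact P.1.inv_mem (P.1.pow_mem hy _)
    -- its order is a power of p and divides card N, so it is 1
    have hord1 : n ^ p ^ k = 1 := by
      obtain ⟨m, hm⟩ := P.2 ⟨n ^ p ^ k, hnP⟩
      have hdvd : orderOf (n ^ p ^ k) ∣ p ^ m := by
        apply orderOf_dvd_of_pow_eq_one
        have := congrArg (Subgroup.subtype P.1) hm
        simpa using this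
      have hdvdN : orderOf (n ^ p ^ k) ∣ Nat.card N := by
        have h1 : orderOf (⟨n, hn⟩ : N) ∣ Nat.card N := orderOf_dvd_natCard _
        have h2 : orderOf (n ^ p ^ k) ∣ orderOf n := orderOf_pow_dvd _
        have h3 : orderOf (⟨n, hn⟩ : N) = orderOf n := by
          rw [← Subgroup.orderOf_coe]
        exact h2.trans (h3 ▸ h1)
      have hcop : Nat.Coprime (orderOf (n ^ p ^ k)) (Nat.card N) := by
        obtain ⟨j, hj⟩ := (Nat.dvd_prime_pow hp).mp hdvd
        rw [hj.2]
        exact Nat.Coprime.pow_left _ (hp.coprime_iff_not_dvd.mpr hNp)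
      exact orderOf_eq_one_iff.mp (Nat.Coprime.eq_one_of_dvd hcop hdvdN)
    -- so orderOf n divides p ^ k and card N, hence n = 1
    have hn1 : n = 1 := by
      have h1 : orderOf n ∣ p ^ k := orderOf_dvd_of_pow_eq_one hord1
      have h2 : orderOf n ∣ Nat.card N := by
        have h3 : orderOf (⟨n, hn⟩ : N) = orderOf n := by rw [← Subgroup.orderOf_coe]
        exact h3 ▸ orderOf_dvd_natCard (⟨n, hn⟩ : N)
      have hcop : Nat.Coprime (p ^ k) (Nat.card N) :=
        Nat.Coprime.pow_left _ (hp.coprime_iff_not_dvd.mpr hNp)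
      exact orderOf_eq_one_iff.mp
        (Nat.Coprime.eq_one_of_dvd (Nat.Coprime.coprime_dvd_left h1 hcop) h2)
    simpa [hn1] using hy

end Aux

theorem stmt_5 {G : Type*} [Group G] [Fintype G] {p : ℕ} (hp : p.Prime)
    (N : Subgroup G) (hNc : N ≤ Subgroup.center G) (hNp : ¬ p ∣ Nat.card N)
    (x : G) (hx : ∃ k : ℕ, orderOf x = p ^ k) :
    letI : N.Normal :=
      ⟨fun n hn g => by
        have h := (Subgroup.mem_center_iff.mp (hNc hn)) g
        rw [h]
        simpa using hn⟩
    (∃! P : Sylow p G, x ∈ P) ↔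
      ∃! Q : Sylow p (G ⧸ N), ((x : G ⧸ N) ∈ Q) := by
  letI : N.Normal :=
    ⟨fun n hn g => by
      have h := (Subgroup.mem_center_iff.mp (hNc hn)) g
      rw [h]
      simpa using hn⟩
  haveI : Fact p.Prime := ⟨hp⟩
  have hsurj : Function.Surjective (QuotientGroup.mk' N) := QuotientGroup.mk'_surjective N
  set F : Sylow p G → Sylow p (G ⧸ N) := Sylow.mapSurjective hsurj with hF
  have hFmem : ∀ (P : Sylow p G) {g : G}, (∃ k : ℕ, g ^ p ^ k = 1) →
      (g ∈ P ↔ ((g : G ⧸ N) ∈ F P)) := by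
    intro P g hg
    rw [show ((g : G ⧸ N) ∈ F P) ↔ ((g : G ⧸ N) ∈ P.1.map (QuotientGroup.mk' N)) from Iff.rfl]
    exact aux_mem hp N hNc hNp P hg
  have hFinj : Function.Injective F := by
    intro P Q h
    ext g
    constructor
    · intro hg
      have hgp : ∃ k : ℕ, g ^ p ^ k = 1 := by
        obtain ⟨k, hk⟩ := P.2 ⟨g, hg⟩
        exact ⟨k, by simpa using congrArg (Subgroup.subtype P.1) hk⟩
      exact (hFmem Q hgp).mpr (h ▸ (hFmem P hgp).mp hg)
    · intro hg
      have hgp : ∃ k : ℕ, g ^ p ^ k = 1 := by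
        obtain ⟨k, hk⟩ := Q.2 ⟨g, hg⟩
        exact ⟨k, by simpa using congrArg (Subgroup.subtype Q.1) hk⟩
      exact (hFmem P hgp).mpr (h ▸ (hFmem Q hgp).mp hg)
  have hFsurj : Function.Surjective F := Sylow.mapSurjective_surjective hsurj p
  obtain ⟨k, hk⟩ := hx
  have hxp : ∃ k : ℕ, x ^ p ^ k = 1 := ⟨k, by rw [← hk]; exact pow_orderOf_eq_one x⟩
  constructor
  · rintro ⟨P, hxP, huniq⟩
    refine ⟨F P, (hFmem P hxp).mp hxP, ?_⟩
    intro Q hQ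
    obtain ⟨P', rfl⟩ := hFsurj Q
    exact congrArg F (huniq P' ((hFmem P' hxp).mpr hQ))
  · rintro ⟨Q, hxQ, huniq⟩
    have hxpg : IsPGroup p (Subgroup.zpowers x) := by
      apply IsPGroup.of_card
      rw [Nat.card_zpowers, hk]
    obtain ⟨P, hP⟩ := hxpg.exists_le_sylow
    have hxP : x ∈ P := hP (Subgroup.mem_zpowers x)
    refine ⟨P, hxP, ?_⟩
    intro P' hxP'
    apply hFinj
    rw [huniq (F P') ((hFmem P' hxp).mp hxP'), huniq (F P) ((hFmem P hxp).mp hxP)]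
end

section
/- Let G be a finite group, p a prime, and x ∈ G a p-element. Then the subnormalizer Sub_G(x), defined as the subgroup generated by {g ∈ G : ⟨x⟩ is subnormal in ⟨g, x⟩}, equals the subgroup of G generated by the normalizers N_G(P) of all Sylow p-subgroups P of G that contain x. -/
variable {G : Type*} [Group G]

/-- `A` is subnormal in `B`: there is a chain `A = s 0 ⊴ s 1 ⊴ ⋯ ⊴ s n = B`. -/
def IsSubnormalIn (A B : Subgroup G) : Prop :=
  ∃ (n : ℕ) (s : ℕ → Subgroup G), s 0 = A ∧ s n = B ∧
    ∀ i < n, s i ≤ s (i + 1) ∧ ∀ g ∈ s (i + 1), ∀ a ∈ s i, g * a * g⁻¹ ∈ s i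

/-- The subnormaliser `Sub_G(x)` of an element `x`. -/
def subnormalizer (x : G) : Subgroup G :=
  Subgroup.closure
    {g : G | IsSubnormalIn (Subgroup.zpowers x) (Subgroup.closure {g, x})}

namespace SubnormAux

open Subgroup
open scoped Pointwise

section CardLemmas

variable [Fintype G]

lemma card_subgroupOf_eq {H K : Subgroup G} (h : H ≤ K) :
    Nat.card (H.subgroupOf K) = Nat.card H :=
  Nat.card_congr (Subgroup.subgroupOfEquivOfLe h).toEquiv

lemma eq_of_le_of_card_le {H K : Subgroup G} (h : H ≤ K)
    (hc : Nat.card K ≤ Nat.card H) : H = K := by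
  have h1 : H.subgroupOf K = ⊤ := by
    apply Subgroup.eq_top_of_card_eq
    rw [card_subgroupOf_eq h]
    exact le_antisymm (Subgroup.card_le_of_le h) hc
  exact le_antisymm h (subgroupOf_eq_top.mp h1)

lemma card_lt_of_lt {H K : Subgroup G} (h : H < K) : Nat.card H < Nat.card K :=
  lt_of_le_of_ne (Subgroup.card_le_of_le h.le)
    (fun e => h.ne (eq_of_le_of_card_le h.le e.ge))

end CardLemmas

variable {p : ℕ} [Fact p.Prime]

/-- Normalizer condition inside a `p`-subgroup, at the level of subgroups of `G`. -/
lemma lt_normalizer_inf [Fintype G] {K A : Subgroup G} (hK : IsPGroup p K)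
    (hAK : A ≤ K) (hne : A ≠ K) : A < normalizer (SetLike.coe A) ⊓ K := by
  have hnil : Group.IsNilpotent ↥K := hK.isNilpotent
  have hnc := normalizerCondition_of_isNilpotent (G := ↥K)
  have h1 : A.subgroupOf K < ⊤ := by
    rcases lt_or_eq_of_le (le_top : A.subgroupOf K ≤ ⊤) with h | h
    · exact h
    · exact absurd (le_antisymm hAK (subgroupOf_eq_top.mp h)) hne
  obtain ⟨k, hk1, hk2⟩ := SetLike.exists_of_lt (hnc _ h1)
  rw [SetLike.lt_iff_le_and_exists]
  refine ⟨le_inf le_normalizer hAK, (k : G), ?_, ?_⟩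
  · refine mem_inf.mpr ⟨?_, k.2⟩
    rw [mem_normalizer_iff]
    intro h
    constructor
    · intro hh
      have : (⟨h, hAK hh⟩ : K) ∈ A.subgroupOf K := hh
      have := (mem_normalizer_iff.mp hk1 ⟨h, hAK hh⟩).mp this
      exact this
    · intro hh
      have hhK : h ∈ K := by
        have h2 : (k : G) * h * (k : G)⁻¹ ∈ K := hAK hh
        have : h = (k : G)⁻¹ * ((k : G) * h * (k : G)⁻¹) * (k : G) := by group
        rw [this]
        exact mul_mem (mul_mem (inv_mem k.2) h2) k.2
      have : (k * ⟨h, hhK⟩ * k⁻¹ : K) ∈ A.subgroupOf K := by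
        show ((k * ⟨h, hhK⟩ * k⁻¹ : K) : G) ∈ A
        simpa using hh
      exact (mem_normalizer_iff.mp hk1 ⟨h, hhK⟩).mpr this
  · exact fun hkA => hk2 hkA

/-- Any subgroup of a finite `p`-group is subnormal in it. -/
lemma isSubnormalIn_of_isPGroup [Fintype G] {A K : Subgroup G}
    (hK : IsPGroup p K) (hAK : A ≤ K) : IsSubnormalIn A K := by
  set f : Subgroup G → Subgroup G := fun T => normalizer (SetLike.coe T) ⊓ K with hf
  set s : ℕ → Subgroup G := fun i => f^[i] A with hs
  have hsucc : ∀ i, s (i + 1) = normalizer (SetLike.coe (s i)) ⊓ K := by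
    intro i
    simp [hs, Function.iterate_succ_apply', hf]
  have hsK : ∀ i, s i ≤ K := by
    intro i
    cases i with
    | zero => exact hAK
    | succ i => rw [hsucc i]; exact inf_le_right
  have hle : ∀ i, s i ≤ s (i + 1) := fun i =>
    (hsucc i).symm ▸ le_inf le_normalizer (hsK i)
  have hstab : ∀ i, s i = K → s (i + 1) = K := by
    intro i h
    rw [hsucc i, h]
    exact inf_eq_right.mpr le_normalizer
  have hgrow : ∀ i, s i = K ∨ i ≤ Nat.card (s i) := by
    intro i
    induction i with
    | zero => exact Or.inr (Nat.zero_le _)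
    | succ i ih =>
      rcases ih with h | h
      · exact Or.inl (hstab i h)
      · by_cases h2 : s i = K
        · exact Or.inl (hstab i h2)
        · right
          have hlt : s i < s (i + 1) := by
            rw [hsucc i]
            exact lt_normalizer_inf hK (hsK i) h2
          have := card_lt_of_lt hlt
          omega
  set n := Nat.card G + 1 with hn
  have hfin : s n = K := by
    rcases hgrow n with h | h
    · exact h
    · have := Subgroup.card_le_card_group (s n)
      omega
  refine ⟨n, s, rfl, hfin, fun i _ => ⟨hle i, fun g hg a ha => ?_⟩⟩
  have hgn : g ∈ normalizer (SetLike.coe (s i)) := by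
    rw [hsucc i] at hg
    exact (mem_inf.mp hg).1
  exact (mem_normalizer_iff.mp hgn a).mp ha

/-- Append a final normal step to a subnormal chain. -/
lemma IsSubnormalIn.append {A K H : Subgroup G} (h : IsSubnormalIn A K)
    (hKH : K ≤ H) (hconj : ∀ g ∈ H, ∀ a ∈ K, g * a * g⁻¹ ∈ K) :
    IsSubnormalIn A H := by
  obtain ⟨n, s, h0, hn, hs⟩ := h
  refine ⟨n + 1, fun i => if i ≤ n then s i else H, by simpa using h0, by simp, ?_⟩
  intro i hi
  by_cases h1 : i < n
  · have e1 : (if i ≤ n then s i else H) = s i := if_pos (le_of_lt h1)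
    have e2 : (if i + 1 ≤ n then s (i + 1) else H) = s (i + 1) := if_pos h1
    simp only [e1, e2]
    exact hs i h1
  · have hin : i = n := by omega
    subst hin
    have e1 : (if i ≤ i then s i else H) = s i := if_pos le_rfl
    have e2 : (if i + 1 ≤ i then s (i + 1) else H) = H := if_neg (by omega)
    simp only [e1, e2]
    rw [hn]
    exact ⟨hKH, hconj⟩

/-- A normal `p`-subgroup is contained in every Sylow `p`-subgroup. -/
lemma normal_le_sylow {K : Type*} [Group K] [Finite K] {A : Subgroup K}
    (hA : IsPGroup p A) (hN : A.Normal) (Q : Sylow p K) : A ≤ Q := by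
  obtain ⟨S, hS⟩ := hA.exists_le_sylow
  obtain ⟨g, hg⟩ := MulAction.exists_smul_eq K S Q
  calc A = MulAut.conj g • A := (Subgroup.Normal.conj_smul_eq_self g A).symm
    _ ≤ MulAut.conj g • (S : Subgroup K) := by
        rw [Subgroup.pointwise_smul_def, Subgroup.pointwise_smul_def]
        exact Subgroup.map_mono hS
    _ = ((g • S : Sylow p K) : Subgroup K) := (Sylow.coe_subgroup_smul).symm
    _ = Q := by rw [hg]

/-- `Q` is a maximal `p`-subgroup of `B` (a "Sylow `p`-subgroup of `B`"),
phrased for subgroups of `G`. -/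
def sylIn (p : ℕ) (B Q : Subgroup G) : Prop :=
  Q ≤ B ∧ IsPGroup p Q ∧
    ∀ R : Subgroup G, IsPGroup p R → Q ≤ R → R ≤ B → R ≤ Q

lemma sylIn_map (B : Subgroup G) (Q : Sylow p ↥B) :
    sylIn p B ((Q : Subgroup ↥B).map B.subtype) := by
  refine ⟨map_subtype_le _, Q.2.map _, ?_⟩
  intro R hR hQR hRB
  have hR' : IsPGroup p (R.subgroupOf B) :=
    hR.of_equiv (Subgroup.subgroupOfEquivOfLe hRB).symm
  have hQR' : (Q : Subgroup ↥B) ≤ R.subgroupOf B := by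
    intro q hq
    exact hQR ⟨q, hq, rfl⟩
  have := Q.3 hR' hQR'
  intro r hr
  have : (⟨r, hRB hr⟩ : ↥B) ∈ R.subgroupOf B := hr
  rw [Q.3 hR' hQR'] at this
  exact ⟨⟨r, hRB hr⟩, this, rfl⟩

lemma exists_sylow_of_sylIn {B Q : Subgroup G} (h : sylIn p B Q) :
    ∃ Q' : Sylow p ↥B, Q = (Q' : Subgroup ↥B).map B.subtype := by
  obtain ⟨hQB, hQp, hmax⟩ := h
  have hQp' : IsPGroup p (Q.subgroupOf B) :=
    hQp.of_equiv (Subgroup.subgroupOfEquivOfLe hQB).symm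
  refine ⟨⟨Q.subgroupOf B, hQp', ?_⟩, ?_⟩
  · intro R hR hQR
    have hRmap : IsPGroup p (R.map B.subtype) := hR.map _
    have h1 : Q ≤ R.map B.subtype := by
      intro q hq
      exact ⟨⟨q, hQB hq⟩, hQR hq, rfl⟩
    have h2 : R.map B.subtype ≤ Q := hmax _ hRmap h1 (map_subtype_le _)
    apply le_antisymm _ hQR
    intro r hr
    exact h2 ⟨r, hr, rfl⟩
  · show Q = (Q.subgroupOf B).map B.subtype
    rw [subgroupOf_map_subtype, inf_of_le_left hQB]

/-- The intersection of the maximal `p`-subgroups of `B` (the "`p`-core" of `B`). -/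
def pcs (p : ℕ) (B : Subgroup G) : Subgroup G :=
  sInf {Q | sylIn p B Q}

lemma pcs_le_of_sylIn {B Q : Subgroup G} (h : sylIn p B Q) : pcs p B ≤ Q :=
  sInf_le h

lemma le_pcs_of_normal [Fintype G] {A B : Subgroup G} (hA : IsPGroup p A) (hAB : A ≤ B)
    (hnorm : ∀ b ∈ B, ∀ a ∈ A, b * a * b⁻¹ ∈ A) : A ≤ pcs p B := by
  apply le_sInf
  intro Q hQ
  obtain ⟨Q', rfl⟩ := exists_sylow_of_sylIn hQ
  have hA' : IsPGroup p (A.subgroupOf B) :=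
    hA.of_equiv (Subgroup.subgroupOfEquivOfLe hAB).symm
  have hN : (A.subgroupOf B).Normal := by
    constructor
    intro n hn b
    exact hnorm (b : G) b.2 (n : G) hn
  have h1 : A.subgroupOf B ≤ (Q' : Subgroup ↥B) := normal_le_sylow hA' hN Q'
  intro a ha
  exact ⟨⟨a, hAB ha⟩, h1 ha, rfl⟩

lemma conj_map_conj_inv (b : G) (T : Subgroup G) :
    (T.map (MulAut.conj b).toMonoidHom).map (MulAut.conj b⁻¹).toMonoidHom = T := by
  ext y
  constructor
  · rintro ⟨z, ⟨t, ht, rfl⟩, rfl⟩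
    show MulAut.conj b⁻¹ (MulAut.conj b t) ∈ T
    simp only [MulAut.conj_apply]
    have h : b⁻¹ * (b * t * b⁻¹) * b⁻¹⁻¹ = t := by group
    rw [h]
    exact ht
  · intro hy
    refine ⟨MulAut.conj b y, ⟨y, hy, rfl⟩, ?_⟩
    show MulAut.conj b⁻¹ (MulAut.conj b y) = y
    simp only [MulAut.conj_apply]
    group

lemma sylIn_conj [Fintype G] {B Q : Subgroup G} {b : G} (hb : b ∈ normalizer (SetLike.coe B))
    (hQ : sylIn p B Q) : sylIn p B (Q.map (MulAut.conj b).toMonoidHom) := by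
  obtain ⟨hQB, hQp, hmax⟩ := hQ
  have hmem : ∀ {c : G}, c ∈ normalizer (SetLike.coe B) → ∀ {T : Subgroup G}, T ≤ B →
      T.map (MulAut.conj c).toMonoidHom ≤ B := by
    intro c hc T hT y hy
    obtain ⟨t, ht, rfl⟩ := hy
    exact (mem_normalizer_iff.mp hc t).mp (hT ht)
  refine ⟨hmem hb hQB, hQp.map _, ?_⟩
  intro R hR hQR hRB
  have h1 : Q ≤ R.map (MulAut.conj b⁻¹).toMonoidHom := by
    conv_lhs => rw [← conj_map_conj_inv b Q]
    exact Subgroup.map_mono hQR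
  have h2 : R.map (MulAut.conj b⁻¹).toMonoidHom ≤ B :=
    hmem (inv_mem hb) hRB
  have h3 := hmax _ (hR.map _) h1 h2
  have key' : (R.map (MulAut.conj b⁻¹).toMonoidHom).map (MulAut.conj b).toMonoidHom = R := by
    have := conj_map_conj_inv b⁻¹ R
    rwa [inv_inv] at this
  calc R = (R.map (MulAut.conj b⁻¹).toMonoidHom).map (MulAut.conj b).toMonoidHom :=
        key'.symm
    _ ≤ Q.map (MulAut.conj b).toMonoidHom := Subgroup.map_mono h3

lemma conj_mem_pcs [Fintype G] {B : Subgroup G} {b : G} (hb : b ∈ normalizer (SetLike.coe B))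
    {a : G} (ha : a ∈ pcs p B) : b * a * b⁻¹ ∈ pcs p B := by
  rw [pcs, Subgroup.mem_sInf]
  intro Q hQ
  have h1 : sylIn p B (Q.map (MulAut.conj b⁻¹).toMonoidHom) := sylIn_conj (inv_mem hb) hQ
  have h2 : a ∈ Q.map (MulAut.conj b⁻¹).toMonoidHom := pcs_le_of_sylIn h1 ha
  obtain ⟨q, hq, hq2⟩ := h2
  have hz : a = b⁻¹ * q * b := by
    have : MulAut.conj b⁻¹ q = a := hq2
    simp only [MulAut.conj_apply, inv_inv] at this
    exact this.symm
  have : b * a * b⁻¹ = q := by rw [hz]; group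
  rw [this]
  exact hq

lemma le_pcs_of_isSubnormalIn [Fintype G] {A B : Subgroup G} (hA : IsPGroup p A)
    (h : IsSubnormalIn A B) : A ≤ pcs p B := by
  obtain ⟨n, s, h0, hn, hs⟩ := h
  have key : ∀ i ≤ n, A ≤ pcs p (s i) := by
    intro i
    induction i with
    | zero =>
      intro _
      rw [h0]
      exact le_pcs_of_normal hA le_rfl
        (fun b hb a ha => mul_mem (mul_mem hb ha) (inv_mem hb))
    | succ i ih =>
      intro hin
      have ihi := ih (by omega)
      have hsyl : Nonempty (Sylow p ↥(s i)) := inferInstance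
      obtain ⟨Q'⟩ := hsyl
      have hple : pcs p (s i) ≤ (Q' : Subgroup ↥(s i)).map (s i).subtype :=
        pcs_le_of_sylIn (sylIn_map _ _)
      have hpcs_pgrp : IsPGroup p (pcs p (s i)) := (Q'.2.map _).to_le hple
      have hpcs_le : pcs p (s i) ≤ s (i + 1) :=
        le_trans (le_trans hple (map_subtype_le _)) (hs i (by omega)).1
      have hbnorm : ∀ b ∈ s (i + 1), b ∈ normalizer (SetLike.coe (s i)) := by
        intro b hb
        rw [mem_normalizer_iff]
        intro h
        constructor
        · exact fun hh => (hs i (by omega)).2 b hb h hh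
        · intro hh
          have := (hs i (by omega)).2 b⁻¹ (inv_mem hb) _ hh
          simpa [mul_assoc] using this
      refine le_trans ihi (le_pcs_of_normal hpcs_pgrp hpcs_le ?_)
      intro b hb a ha
      exact conj_mem_pcs (hbnorm b hb) ha
  rw [← hn]
  exact key n le_rfl

lemma map_subtype_normalizer_le {K : Subgroup G} (A : Subgroup ↥K) (k : ↥K)
    (hk : k ∈ normalizer (SetLike.coe A)) : (k : G) ∈ normalizer (SetLike.coe (A.map K.subtype)) := by
  rw [mem_normalizer_iff]
  intro y
  constructor
  · rintro ⟨a, ha, rfl⟩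
    exact ⟨k * a * k⁻¹, (mem_normalizer_iff.mp hk a).mp ha, rfl⟩
  · rintro ⟨a, ha, ha2⟩
    have hy : y = ((k⁻¹ * a * k : ↥K) : G) := by
      push_cast
      have : (a : G) = (k : G) * y * (k : G)⁻¹ := ha2
      rw [this]; group
    rw [hy]
    refine ⟨k⁻¹ * a * k, ?_, rfl⟩
    have := (mem_normalizer_iff.mp (inv_mem hk) a).mp ha
    simpa [mul_assoc] using this

/-- Frattini-style assembly: if every Sylow `p`-subgroup of `K` (viewed in `G`) lies
in `D`, and the normalizer of one of them lies in `D`, then `K ≤ D`. -/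
lemma frat [Fintype G] {K : Subgroup G} (D : Subgroup G) (Q0 : Sylow p ↥K)
    (h1 : ∀ Q : Sylow p ↥K, (Q : Subgroup ↥K).map K.subtype ≤ D)
    (h2 : normalizer (SetLike.coe ((Q0 : Subgroup ↥K).map K.subtype)) ≤ D) : K ≤ D := by
  set Nn : Subgroup ↥K := normalClosure ((Q0 : Subgroup ↥K) : Set ↥K) with hNn
  have hfr := Sylow.normalizer_sup_eq_top' (N := Nn) Q0 le_normalClosure
  have hNnD : Nn ≤ D.subgroupOf K := by
    rw [hNn]
    show closure (Group.conjugatesOfSet ((Q0 : Subgroup ↥K) : Set ↥K)) ≤ D.subgroupOf K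
    rw [closure_le]
    intro a ha
    obtain ⟨q, hq, hconj⟩ := Group.mem_conjugatesOfSet_iff.mp ha
    obtain ⟨c, hc⟩ := hconj
    have haQ : a ∈ ((c : ↥K) • Q0 : Sylow p ↥K) := by
      have ha2 : a = (c : ↥K) * q * (c : ↥K)⁻¹ := by
        have h := hc.eq
        calc a = a * (c : ↥K) * (c : ↥K)⁻¹ := by group
          _ = (c : ↥K) * q * (c : ↥K)⁻¹ := by rw [← h]
      rw [ha2]
      have hcoe : (((c : ↥K) • Q0 : Sylow p ↥K) : Subgroup ↥K)
          = MulAut.conj (c : ↥K) • (Q0 : Subgroup ↥K) := Sylow.coe_subgroup_smul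
      show (c : ↥K) * q * (c : ↥K)⁻¹ ∈ (((c : ↥K) • Q0 : Sylow p ↥K) : Subgroup ↥K)
      rw [hcoe, Subgroup.mem_pointwise_smul_iff_inv_smul_mem]
      have : (MulAut.conj (c : ↥K))⁻¹ • ((c : ↥K) * q * (c : ↥K)⁻¹) = q := by
        show (MulAut.conj (c : ↥K))⁻¹ ((c : ↥K) * q * (c : ↥K)⁻¹) = q
        simp only [MulAut.conj_symm_apply, MulAut.conj_inv_apply]
        group
      rw [this]
      exact hq
    show (a : G) ∈ D
    exact h1 ((c : ↥K) • Q0) ⟨a, haQ, rfl⟩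
  have hnormD : normalizer (SetLike.coe ((Q0 : Subgroup ↥K))) ≤ D.subgroupOf K := by
    intro k hk
    exact h2 (map_subtype_normalizer_le _ k hk)
  intro g hg
  have : (⟨g, hg⟩ : ↥K) ∈ (⊤ : Subgroup ↥K) := mem_top _
  rw [← hfr] at this
  have hD : (⟨g, hg⟩ : ↥K) ∈ D.subgroupOf K := by
    have hsup : normalizer (SetLike.coe (Q0 : Subgroup ↥K)) ⊔ Nn ≤ D.subgroupOf K :=
      sup_le hnormD hNnD
    exact hsup this
  exact hD

section Main

variable [Fintype G] (x : G)

/-- The join of the normalizers of Sylow `p`-subgroups containing `x`. -/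
noncomputable def Dd (p : ℕ) (x : G) : Subgroup G :=
  ⨆ (P : Sylow p G) (_ : x ∈ P), normalizer (SetLike.coe (P : Subgroup G))

lemma psub_le_Dd {Q : Subgroup G} (hQ : IsPGroup p Q) (hx : x ∈ Q) : Q ≤ Dd p x := by
  obtain ⟨P, hQP⟩ := hQ.exists_le_sylow
  have hxP : x ∈ P := hQP hx
  calc Q ≤ (P : Subgroup G) := hQP
    _ ≤ normalizer (SetLike.coe (P : Subgroup G)) := le_normalizer
    _ ≤ Dd p x := le_iSup_of_le P (le_iSup_of_le hxP le_rfl)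

lemma normalizer_le_Dd (n : ℕ) :
    ∀ Q : Subgroup G, IsPGroup p Q → x ∈ Q →
      Nat.card G - Nat.card Q ≤ n → normalizer (SetLike.coe Q) ≤ Dd p x := by
  induction n with
  | zero =>
    intro Q hQ hxQ hcard
    obtain ⟨P, hQP⟩ := hQ.exists_le_sylow
    have heq : Q = (P : Subgroup G) := by
      by_contra hne
      have h1 := card_lt_of_lt (lt_of_le_of_ne hQP hne)
      have h2 := Subgroup.card_le_card_group (P : Subgroup G)
      omega
    rw [heq] at hxQ ⊢
    exact le_iSup_of_le P (le_iSup_of_le hxQ le_rfl)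
  | succ n ih =>
    intro Q hQ hxQ hcard
    obtain ⟨P, hQP⟩ := hQ.exists_le_sylow
    by_cases hne : Q = (P : Subgroup G)
    · rw [hne] at hxQ ⊢
      exact le_iSup_of_le P (le_iSup_of_le hxQ le_rfl)
    · have hlt : Q < normalizer (SetLike.coe Q) ⊓ (P : Subgroup G) :=
        lt_normalizer_inf P.2 hQP hne
      set N := normalizer (SetLike.coe Q) with hN
      set R0 := normalizer (SetLike.coe Q) ⊓ (P : Subgroup G) with hR0
      have hR0N : R0 ≤ N := inf_le_left
      have hQN : Q ≤ N := le_normalizer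
      haveI hQnorm : (Q.subgroupOf N).Normal := Subgroup.normal_in_normalizer
      have hQ' : IsPGroup p (Q.subgroupOf N) :=
        hQ.of_equiv (Subgroup.subgroupOfEquivOfLe hQN).symm
      have hR0p : IsPGroup p R0 := P.2.to_le inf_le_right
      have hR0' : IsPGroup p (R0.subgroupOf N) :=
        hR0p.of_equiv (Subgroup.subgroupOfEquivOfLe hR0N).symm
      obtain ⟨Q0, hQ0⟩ := hR0'.exists_le_sylow
      set R : Subgroup G := (Q0 : Subgroup ↥N).map N.subtype with hR
      have hxmem : ∀ Q' : Sylow p ↥N, x ∈ (Q' : Subgroup ↥N).map N.subtype := by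
        intro Q'
        have h1 : Q.subgroupOf N ≤ (Q' : Subgroup ↥N) :=
          normal_le_sylow hQ' hQnorm Q'
        exact ⟨⟨x, hQN hxQ⟩, h1 hxQ, rfl⟩
      have hRp : IsPGroup p R := Q0.2.map _
      have hcardR : Nat.card Q < Nat.card R := by
        have e1 : Nat.card R = Nat.card (Q0 : Subgroup ↥N) :=
          (Nat.card_congr (Subgroup.equivMapOfInjective _ _
            (Subgroup.subtype_injective N)).toEquiv).symm
        have e2 : Nat.card (R0.subgroupOf N) ≤ Nat.card (Q0 : Subgroup ↥N) :=
          Subgroup.card_le_of_le hQ0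
        have e3 : Nat.card (R0.subgroupOf N) = Nat.card R0 := card_subgroupOf_eq hR0N
        have e4 : Nat.card Q < Nat.card R0 := card_lt_of_lt hlt
        omega
      have h2 : normalizer (SetLike.coe R) ≤ Dd p x := by
        apply ih R hRp (hxmem Q0)
        have := Subgroup.card_le_card_group R
        omega
      have h1 : ∀ Q' : Sylow p ↥N, (Q' : Subgroup ↥N).map N.subtype ≤ Dd p x :=
        fun Q' => psub_le_Dd x (Q'.2.map _) (hxmem Q')
      exact frat (Dd p x) Q0 h1 h2

end Main

end SubnormAux

open Subgroup SubnormAux in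
theorem stmt_7 [Fintype G] {p : ℕ} (hp : p.Prime)
    (x : G) (hx : ∃ k : ℕ, orderOf x = p ^ k) :
    subnormalizer x =
      ⨆ (P : Sylow p G) (_ : x ∈ P), Subgroup.normalizer ((P : Subgroup G) : Set G) := by
  haveI := Fact.mk hp
  obtain ⟨k, hk⟩ := hx
  have hxp : IsPGroup p (zpowers x) :=
    IsPGroup.of_card (n := k) (by rw [Nat.card_zpowers, hk])
  have hgoal : (⨆ (P : Sylow p G) (_ : x ∈ P), normalizer (SetLike.coe (P : Subgroup G))) = Dd p x := rfl
  rw [hgoal]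
  apply le_antisymm
  · -- subnormalizer ≤ Dd
    rw [subnormalizer, closure_le]
    intro g hg
    have hg' : IsSubnormalIn (zpowers x) (closure {g, x}) := hg
    set H := closure ({g, x} : Set G) with hH
    have hpc : zpowers x ≤ pcs p H := le_pcs_of_isSubnormalIn hxp hg'
    have hxmem : ∀ Q' : Sylow p ↥H, x ∈ (Q' : Subgroup ↥H).map H.subtype := by
      intro Q'
      have h1 : pcs p H ≤ (Q' : Subgroup ↥H).map H.subtype :=
        pcs_le_of_sylIn (sylIn_map _ _)
      exact h1 (hpc (mem_zpowers x))
    have hne : Nonempty (Sylow p ↥H) := inferInstance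
    obtain ⟨Q0⟩ := hne
    have h1 : ∀ Q' : Sylow p ↥H, (Q' : Subgroup ↥H).map H.subtype ≤ Dd p x :=
      fun Q' => psub_le_Dd x (Q'.2.map _) (hxmem Q')
    have h2 : normalizer (SetLike.coe ((Q0 : Subgroup ↥H).map H.subtype)) ≤ Dd p x :=
      normalizer_le_Dd x (Nat.card G) _ (Q0.2.map _) (hxmem Q0) (Nat.sub_le _ _)
    have hHD : H ≤ Dd p x := frat (Dd p x) Q0 h1 h2
    exact hHD (Subgroup.subset_closure (Set.mem_insert g {x}))
  · -- Dd ≤ subnormalizer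
    apply iSup_le
    intro P
    apply iSup_le
    intro hxP
    intro g hg
    apply Subgroup.subset_closure
    show IsSubnormalIn (zpowers x) (closure {g, x})
    set H := closure ({g, x} : Set G) with hH
    set K := (P : Subgroup G) ⊓ H with hK
    have hxH : x ∈ H := Subgroup.subset_closure (Set.mem_insert_of_mem g rfl)
    have hgH : g ∈ H := Subgroup.subset_closure (Set.mem_insert g {x})
    have hAK : zpowers x ≤ K := le_inf (zpowers_le.mpr hxP) (zpowers_le.mpr hxH)
    have hKp : IsPGroup p K := P.2.to_le inf_le_left
    have sn1 : IsSubnormalIn (zpowers x) K := isSubnormalIn_of_isPGroup hKp hAK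
    have hHnorm : H ≤ normalizer (SetLike.coe K) := by
      rw [hH, closure_le]
      intro y hy
      have hmemK : ∀ z : G, z ∈ normalizer (SetLike.coe (P : Subgroup G)) → z ∈ normalizer (SetLike.coe H) →
          z ∈ normalizer (SetLike.coe K) := by
        intro z hz1 hz2
        rw [mem_normalizer_iff]
        intro h
        rw [hK, mem_inf, mem_inf,
          ← mem_normalizer_iff.mp hz1 h, ← mem_normalizer_iff.mp hz2 h]
      rcases hy with rfl | hy
      · exact hmemK y hg (le_normalizer hgH)
      · rcases hy with rfl
        exact hmemK y (le_normalizer hxP) (le_normalizer hxH)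
    refine IsSubnormalIn.append sn1 inf_le_right ?_
    intro h hh a ha
    exact (mem_normalizer_iff.mp (hHnorm hh) a).mp ha
end

section
/- Let G be a finite group, p a prime, and x ∈ G a p-element. Then x belongs to a unique Sylow p-subgroup of G if and only if Sub_G(x) = N_G(P) for some Sylow p-subgroup P of G containing x. -/
variable {G : Type*} [Group G]

lemma isSubnormalIn_refl (A : Subgroup G) : IsSubnormalIn A A :=
  ⟨0, fun _ => A, rfl, rfl, fun i hi => absurd hi (Nat.not_lt_zero i)⟩

lemma IsSubnormalIn.prepend {A A' B : Subgroup G} (h1 : A ≤ A')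
    (h2 : ∀ g ∈ A', ∀ a ∈ A, g * a * g⁻¹ ∈ A) (h : IsSubnormalIn A' B) :
    IsSubnormalIn A B := by
  obtain ⟨n, s, hs0, hsn, hs⟩ := h
  refine ⟨n + 1, fun i => if i = 0 then A else s (i - 1), by simp, by simp [hsn], ?_⟩
  intro i hi
  rcases Nat.eq_zero_or_pos i with rfl | hpos
  · simpa [hs0] using ⟨h1, h2⟩
  · have h0 : i ≠ 0 := hpos.ne'
    have h1' : i + 1 ≠ 0 := by omega
    simp only [h0, h1', if_false]
    have : i - 1 < n := by omega
    have := hs (i - 1) this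
    have he : i - 1 + 1 = i + 1 - 1 := by omega
    rw [he] at this
    exact this

lemma IsSubnormalIn.append {A K H : Subgroup G} (h : IsSubnormalIn A K) (h1 : K ≤ H)
    (h2 : ∀ g ∈ H, ∀ a ∈ K, g * a * g⁻¹ ∈ K) : IsSubnormalIn A H := by
  obtain ⟨n, s, hs0, hsn, hs⟩ := h
  refine ⟨n + 1, fun i => if i ≤ n then s i else H, by simp [hs0], by simp, ?_⟩
  intro i hi
  rcases lt_or_ge i n with hlt | hge
  · have : i ≤ n := hlt.le
    have : i + 1 ≤ n := hlt
    simp only [hlt.le, this, if_true]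
    exact hs i hlt
  · have hin : i = n := by omega
    subst hin
    have : ¬ (i + 1 ≤ i) := by omega
    simp only [le_refl, if_true, this, if_false, hsn]
    exact ⟨h1, h2⟩

/-- In a finite group satisfying the normalizer condition, every subgroup is subnormal. -/
lemma isSubnormalIn_top_of_normalizerCondition {H : Type*} [Group H] [Finite H]
    (hnc : NormalizerCondition H) (A : Subgroup H) : IsSubnormalIn A (⊤ : Subgroup H) := by
  have hcard : ∀ (k : ℕ) (A : Subgroup H), Nat.card H - Nat.card A ≤ k →
      IsSubnormalIn A (⊤ : Subgroup H) := by
    intro k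
    induction k with
    | zero =>
      intro A hA
      have hle : Nat.card H ≤ Nat.card A := by omega
      have : A = ⊤ := by
        have hcardeq : Nat.card A = Nat.card H := le_antisymm (Subgroup.card_le_card_group A) hle
        exact (Subgroup.card_eq_iff_eq_top A).mp hcardeq
      rw [this]; exact isSubnormalIn_refl _
    | succ k ih =>
      intro A hA
      by_cases htop : A = ⊤
      · rw [htop]; exact isSubnormalIn_refl _
      · have hlt : A < ⊤ := lt_top_iff_ne_top.mpr htop
        have hln : A < (Subgroup.normalizer (A : Set H)) := hnc A hlt
        have hcards : Nat.card A < Nat.card (Subgroup.normalizer (A : Set H)) := by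
          have hss : (A : Set H) ⊂ (Subgroup.normalizer (A : Set H) : Set H) := SetLike.coe_ssubset_coe.mpr hln
          have hfin : (Subgroup.normalizer (A : Set H) : Set H).Finite := Set.toFinite _
          have := Set.ncard_lt_ncard hss hfin
          rw [← Nat.card_coe_set_eq, ← Nat.card_coe_set_eq] at this
          exact this
        have hrec : IsSubnormalIn (Subgroup.normalizer (A : Set H)) (⊤ : Subgroup H) := ih (Subgroup.normalizer (A : Set H)) (by omega)
        refine IsSubnormalIn.prepend hln.le ?_ hrec
        intro g hg a ha
        exact (Subgroup.mem_normalizer_iff.mp hg a).mp ha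
  exact hcard (Nat.card H) A (by omega)

/-- Any subgroup of a finite `p`-group (as subgroups of `G`) is subnormal in it. -/
lemma isSubnormalIn_of_pGroup [Finite G] {p : ℕ} (hp : p.Prime) {A B : Subgroup G}
    (hAB : A ≤ B) (hB : IsPGroup p B) : IsSubnormalIn A B := by
  haveI : Fact p.Prime := ⟨hp⟩
  have hnil : Group.IsNilpotent B := hB.isNilpotent
  have hnc : NormalizerCondition B := normalizerCondition_of_isNilpotent
  obtain ⟨n, s, hs0, hsn, hs⟩ :=
    isSubnormalIn_top_of_normalizerCondition hnc (A.subgroupOf B)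
  refine ⟨n, fun i => (s i).map B.subtype, ?_, ?_, ?_⟩
  · show (s 0).map B.subtype = A
    rw [hs0, Subgroup.subgroupOf_map_subtype, inf_eq_left.mpr hAB]
  · show (s n).map B.subtype = B
    rw [hsn, ← MonoidHom.range_eq_map, Subgroup.range_subtype]
  · intro i hi
    obtain ⟨hle, hnorm⟩ := hs i hi
    constructor
    · exact Subgroup.map_mono hle
    · rintro g hg a ha
      obtain ⟨g', hg', rfl⟩ := hg
      obtain ⟨a', ha', rfl⟩ := ha
      exact ⟨g' * a' * g'⁻¹, hnorm g' hg' a' ha', rfl⟩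

/-- A p-subgroup of the normalizer of a Sylow p-subgroup is contained in it. -/
lemma le_sylow_of_le_normalizer [Finite G] {p : ℕ} {P : Sylow p G} {R : Subgroup G}
    (hR : IsPGroup p R) (hle : R ≤ Subgroup.normalizer ((P : Subgroup G) : Set G)) : R ≤ (P : Subgroup G) := by
  have hsup : IsPGroup p (R ⊔ (P : Subgroup G) : Subgroup G) :=
    IsPGroup.to_sup_of_normal_right' hR P.isPGroup' hle
  have := P.is_maximal' hsup le_sup_right
  calc R ≤ R ⊔ (P : Subgroup G) := le_sup_left
    _ = (P : Subgroup G) := this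

/-- Normalizers of Sylow subgroups containing `x` lie in the subnormalizer. -/
lemma normalizer_le_subnormalizer [Finite G] {p : ℕ} (hp : p.Prime) {x : G}
    (Q : Sylow p G) (hxQ : x ∈ Q) :
    Subgroup.normalizer ((Q : Subgroup G) : Set G) ≤ subnormalizer x := by
  intro g hg
  apply Subgroup.subset_closure
  show IsSubnormalIn (Subgroup.zpowers x) (Subgroup.closure {g, x})
  set H := Subgroup.closure ({g, x} : Set G) with hH
  have hxH : x ∈ H := Subgroup.subset_closure (by simp)
  have hgH : g ∈ H := Subgroup.subset_closure (by simp)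
  have hHN : H ≤ Subgroup.normalizer ((Q : Subgroup G) : Set G) := by
    rw [hH, Subgroup.closure_le]
    rintro y hy
    rcases hy with rfl | hy
    · exact hg
    · simp only [Set.mem_singleton_iff] at hy
      subst hy
      exact Subgroup.le_normalizer hxQ
  set K := (Q : Subgroup G) ⊓ H with hK
  have hxK : x ∈ K := ⟨hxQ, hxH⟩
  have hKp : IsPGroup p K := Q.isPGroup'.to_le inf_le_left
  have h1 : IsSubnormalIn (Subgroup.zpowers x) K :=
    isSubnormalIn_of_pGroup hp (Subgroup.zpowers_le.mpr hxK) hKp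
  refine h1.append inf_le_right ?_
  rintro h hh a ⟨haQ, haH⟩
  refine ⟨?_, Subgroup.mul_mem _ (Subgroup.mul_mem _ hh haH) (Subgroup.inv_mem _ hh)⟩
  exact (Subgroup.mem_normalizer_iff.mp (hHN hh) a).mp haQ

open Pointwise

theorem stmt_8 [Fintype G] {p : ℕ} (hp : p.Prime)
    (x : G) (hx : ∃ k : ℕ, orderOf x = p ^ k) :
    (∃! P : Sylow p G, x ∈ P) ↔
      ∃ P : Sylow p G, x ∈ P ∧ subnormalizer x = Subgroup.normalizer ((P : Subgroup G) : Set G) := by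
  obtain ⟨k, hk⟩ := hx
  have hxp : IsPGroup p (Subgroup.zpowers x) :=
    IsPGroup.of_card (by rw [Nat.card_zpowers, hk])
  constructor
  · rintro ⟨P, hxP, huniq⟩
    refine ⟨P, hxP, le_antisymm ?_ (normalizer_le_subnormalizer hp P hxP)⟩
    -- the unique Sylow containing any conjugate of x is the corresponding conjugate of P
    have huniq' : ∀ (h : G) (Q : Sylow p G), h * x * h⁻¹ ∈ Q → Q = h • P := by
      intro h Q hQ
      have : x ∈ (h⁻¹ • Q : Sylow p G) := by
        show x ∈ ((h⁻¹ • Q : Sylow p G) : Subgroup G)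
        rw [Sylow.smul_def, Sylow.pointwise_smul_def]
        refine Subgroup.mem_pointwise_smul_iff_inv_smul_mem.mpr ?_
        simp; exact hQ
      have := huniq _ this
      rw [← this, smul_inv_smul]
    -- key: any subnormal chain from ⟨x⟩ stays in N(P)
    have key : ∀ (n : ℕ) (s : ℕ → Subgroup G), s 0 = Subgroup.zpowers x →
        (∀ i < n, s i ≤ s (i + 1) ∧ ∀ g ∈ s (i + 1), ∀ a ∈ s i, g * a * g⁻¹ ∈ s i) →
        s n ≤ Subgroup.normalizer ((P : Subgroup G) : Set G) := by
      intro n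
      induction n with
      | zero =>
        intro s hs0 _
        rw [hs0]
        exact Subgroup.zpowers_le.mpr (Subgroup.le_normalizer hxP)
      | succ n ih =>
        intro s hs0 hs
        have hsnN : s n ≤ Subgroup.normalizer ((P : Subgroup G) : Set G) :=
          ih s hs0 (fun i hi => hs i (by omega))
        intro h hh
        have hxsn : x ∈ s n := by
          have hmono : ∀ i ≤ n, x ∈ s i := by
            intro i hi
            induction i with
            | zero => rw [hs0]; exact Subgroup.mem_zpowers x
            | succ j ihj =>
              exact (hs j (by omega)).1 (ihj (by omega))
          exact hmono n le_rfl
        have hy : h * x * h⁻¹ ∈ s n := (hs n (by omega)).2 h hh x hxsn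
        have hyN : h * x * h⁻¹ ∈ Subgroup.normalizer ((P : Subgroup G) : Set G) := hsnN hy
        -- y is a p-element in N(P), hence in P
        have hyp : IsPGroup p (Subgroup.zpowers (h * x * h⁻¹)) :=
          IsPGroup.of_card (by rw [Nat.card_zpowers, ← SemiconjBy.orderOf_eq h (show SemiconjBy h x (h * x * h⁻¹) by
              simp [SemiconjBy, mul_assoc]), hk])
        have hyP : h * x * h⁻¹ ∈ (P : Subgroup G) :=
          le_sylow_of_le_normalizer hyp (Subgroup.zpowers_le.mpr hyN) (Subgroup.mem_zpowers _)
        have : P = h • P := huniq' h P hyP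
        exact Sylow.smul_eq_iff_mem_normalizer.mp this.symm
    rw [subnormalizer, Subgroup.closure_le]
    intro g hg
    obtain ⟨n, s, hs0, hsn, hs⟩ := hg
    have := key n s hs0 hs
    rw [hsn] at this
    exact this (Subgroup.subset_closure (by simp))
  · rintro ⟨P, hxP, heq⟩
    refine ⟨P, hxP, ?_⟩
    intro Q hxQ
    have h1 : Subgroup.normalizer ((Q : Subgroup G) : Set G) ≤ Subgroup.normalizer ((P : Subgroup G) : Set G) := by
      rw [← heq]
      exact normalizer_le_subnormalizer hp Q hxQ
    have hQP : (Q : Subgroup G) ≤ (P : Subgroup G) :=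
      le_sylow_of_le_normalizer Q.isPGroup' (Subgroup.le_normalizer.trans h1)
    exact Sylow.ext (Q.is_maximal' P.isPGroup' hQP).symm
end

section
/- Let G be a finite group, p a prime, P an abelian Sylow p-subgroup of G, and x ∈ P. Then Sub_G(x) = ⟨C_G(x), N_G(P)⟩. -/
variable {G : Type*} [Group G]

open Subgroup

private lemma sup_helper {p : ℕ} {T K1 K2 : Subgroup G}
    (h1p : IsPGroup p K1) (h2p : IsPGroup p K2) (h1T : K1 ≤ T) (h2T : K2 ≤ T)
    (h1n : ∀ t ∈ T, ∀ k ∈ K1, t * k * t⁻¹ ∈ K1)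
    (h2n : ∀ t ∈ T, ∀ k ∈ K2, t * k * t⁻¹ ∈ K2) :
    IsPGroup p (K1 ⊔ K2 : Subgroup G) ∧ K1 ⊔ K2 ≤ T ∧
      ∀ t ∈ T, ∀ k ∈ K1 ⊔ K2, t * k * t⁻¹ ∈ K1 ⊔ K2 := by
  have hle : K1 ≤ normalizer (K2 : Set G) := by
    intro h hh
    rw [mem_normalizer_iff]
    intro n
    constructor
    · exact fun hn => h2n h (h1T hh) n hn
    · intro hn
      have h2 := h2n h⁻¹ (inv_mem (h1T hh)) _ hn
      have e : h⁻¹ * (h * n * h⁻¹) * h⁻¹⁻¹ = n := by group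
      rwa [e] at h2
  refine ⟨IsPGroup.to_sup_of_normal_right' h1p h2p hle, sup_le h1T h2T, ?_⟩
  intro t ht k hk
  have m1 : K1.map (MulAut.conj t).toMonoidHom ≤ K1 := by
    rintro _ ⟨k, hk, rfl⟩; simpa using h1n t ht k hk
  have m2 : K2.map (MulAut.conj t).toMonoidHom ≤ K2 := by
    rintro _ ⟨k, hk, rfl⟩; simpa using h2n t ht k hk
  have hmem : (MulAut.conj t).toMonoidHom k ∈ (K1 ⊔ K2).map (MulAut.conj t).toMonoidHom :=
    mem_map_of_mem _ hk
  rw [Subgroup.map_sup] at hmem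
  have := sup_le (m1.trans le_sup_left) (m2.trans (le_sup_right : K2 ≤ K1 ⊔ K2)) hmem
  simpa using this

private lemma chain_exists_pgroup {p : ℕ} [Finite G] {A : Subgroup G} (hA : IsPGroup p A) :
    ∀ (n : ℕ) (s : ℕ → Subgroup G), s 0 = A →
      (∀ i < n, s i ≤ s (i + 1) ∧ ∀ g ∈ s (i + 1), ∀ a ∈ s i, g * a * g⁻¹ ∈ s i) →
      ∃ K : Subgroup G, IsPGroup p K ∧ A ≤ K ∧ K ≤ s n ∧
        ∀ b ∈ s n, ∀ k ∈ K, b * k * b⁻¹ ∈ K := by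
  intro n
  induction n with
  | zero =>
    intro s h0 _
    refine ⟨A, hA, le_rfl, h0.ge, ?_⟩
    rw [h0]
    exact fun b hb k hk => mul_mem (mul_mem hb hk) (inv_mem hb)
  | succ n ih =>
    intro s h0 hc
    obtain ⟨K, hKp, hAK, hKT, hKn⟩ := ih s h0 (fun i hi => hc i (Nat.lt_succ_of_lt hi))
    obtain ⟨hTB, hnorm⟩ := hc n (Nat.lt_succ_self n)
    set T := s n with hT
    set B := s (n + 1) with hB
    set f : G → Subgroup G := fun b => K.map (MulAut.conj b).toMonoidHom with hf
    set S : Set (Subgroup G) := f '' (B : Set G) with hS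
    have hmem : ∀ M ∈ S, IsPGroup p M ∧ M ≤ T ∧ ∀ t ∈ T, ∀ k ∈ M, t * k * t⁻¹ ∈ M := by
      rintro _ ⟨b, hb, rfl⟩
      refine ⟨hKp.map _, ?_, ?_⟩
      · rintro _ ⟨k, hk, rfl⟩
        simpa using hnorm b hb k (hKT hk)
      · rintro t ht _ ⟨k, hk, rfl⟩
        have hc' : b⁻¹ * t * b ∈ T := by
          have := hnorm b⁻¹ (inv_mem hb) t ht
          simpa using this
        have hk' : (b⁻¹ * t * b) * k * (b⁻¹ * t * b)⁻¹ ∈ K := hKn _ hc' k hk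
        refine ⟨_, hk', ?_⟩
        simp only [MulEquiv.coe_toMonoidHom, MulAut.conj_apply]
        group
    have key : ∀ (s' : Set (Subgroup G)), s'.Finite →
        (∀ M ∈ s', IsPGroup p M ∧ M ≤ T ∧ ∀ t ∈ T, ∀ k ∈ M, t * k * t⁻¹ ∈ M) →
        IsPGroup p (sSup s' : Subgroup G) ∧ sSup s' ≤ T ∧
          ∀ t ∈ T, ∀ k ∈ sSup s', t * k * t⁻¹ ∈ sSup s' := by
      intro s' hs'
      refine Set.Finite.induction_on s' hs' ?_ ?_
      · intro _
        rw [sSup_empty]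
        refine ⟨IsPGroup.of_bot, bot_le, ?_⟩
        intro t ht k hk
        simp only [Subgroup.mem_bot] at hk
        simp [hk]
      · intro M s'' hnotmem hfin ihs hall
        have hM := hall M (Set.mem_insert _ _)
        have hrest := ihs (fun N hN => hall N (Set.mem_insert_of_mem _ hN))
        rw [sSup_insert]
        exact sup_helper hM.1 hrest.1 hM.2.1 hrest.2.1 hM.2.2 hrest.2.2
    have hSfin : S.Finite := (Set.toFinite _).image f
    obtain ⟨hp', hle', hn'⟩ := key S hSfin hmem
    refine ⟨sSup S, hp', ?_, hle'.trans hTB, ?_⟩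
    · have hK1 : K ∈ S := by
        refine ⟨1, one_mem _, ?_⟩
        ext y
        simp [hf]
      exact hAK.trans (le_sSup hK1)
    · intro b hb k hk
      have himg : ∀ M ∈ S, M.map (MulAut.conj b).toMonoidHom ∈ S := by
        rintro _ ⟨b', hb', rfl⟩
        refine ⟨b * b', mul_mem hb hb', ?_⟩
        rw [hf]
        simp only
        rw [Subgroup.map_map]
        congr 1
        ext y
        simp [mul_assoc]
      have hmap : (sSup S).map (MulAut.conj b).toMonoidHom ≤ sSup S := by
        rw [(Subgroup.gc_map_comap (MulAut.conj b).toMonoidHom).l_sSup]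
        exact iSup₂_le fun M hM => le_sSup (himg M hM)
      have : (MulAut.conj b).toMonoidHom k ∈ (sSup S).map (MulAut.conj b).toMonoidHom :=
        mem_map_of_mem _ hk
      have := hmap this
      simpa using this

theorem stmt_12 [Fintype G] {p : ℕ} (hp : p.Prime)
    (P : Sylow p G) (hP : IsMulCommutative (P : Subgroup G))
    (x : G) (hx : x ∈ P) :
    subnormalizer x = Subgroup.centralizer {x} ⊔ Subgroup.normalizer ((P : Subgroup G) : Set G) := by
  haveI := Fact.mk hp
  haveI := hP
  apply le_antisymm
  · rw [subnormalizer, closure_le]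
    rintro g hg
    obtain ⟨n, s, h0, hn, hc⟩ := hg
    obtain ⟨K, hKp, hAK, hKB, hKn⟩ :=
      chain_exists_pgroup (P.2.to_le (zpowers_le.mpr hx)) n s h0 hc
    rw [hn] at hKB hKn
    have hxK : x ∈ K := hAK (mem_zpowers x)
    have hgH : g ∈ Subgroup.closure ({g, x} : Set G) := subset_closure (Set.mem_insert _ _)
    have hyK : g⁻¹ * x * g ∈ K := by
      have := hKn g⁻¹ (inv_mem hgH) x hxK
      simpa using this
    obtain ⟨Q, hKQ⟩ := hKp.exists_le_sylow
    obtain ⟨h, hh⟩ := MulAction.exists_smul_eq G P Q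
    haveI hQcomm : IsMulCommutative (Q : Subgroup G) := by
      rw [← hh]
      exact Subgroup.map_isMulCommutative (P : Subgroup G) (MulAut.conj h).toMonoidHom
    have hxQ : x ∈ Q := hKQ hxK
    have hyQ : g⁻¹ * x * g ∈ Q := hKQ hyK
    obtain ⟨m, hmQ, hconj⟩ := Q.conj_eq_normalizer_conj_of_mem x g hxQ hyQ
    -- conjugate Q to P inside the centralizer of x
    have h1 : (P : Subgroup G) ≤ centralizer (zpowers x : Set G) := by
      rw [le_centralizer_iff, zpowers_le]
      exact le_centralizer (P : Subgroup G) hx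
    have h2 : (Q : Subgroup G) ≤ centralizer (zpowers x : Set G) := by
      rw [le_centralizer_iff, zpowers_le]
      exact le_centralizer (Q : Subgroup G) hxQ
    obtain ⟨c, hc'⟩ :=
      MulAction.exists_smul_eq (centralizer (zpowers x : Set G)) (Q.subtype h2) (P.subtype h1)
    rw [Sylow.smul_subtype] at hc'
    have hcQP : (c : G) • Q = P := Sylow.subtype_injective hc'
    have hQP : ((c : G))⁻¹ • P = Q := by rw [← hcQP, inv_smul_smul]
    -- n := c * m * c⁻¹ normalizes P
    have hmn : (c : G) * m * (c : G)⁻¹ ∈ Subgroup.normalizer ((P : Subgroup G) : Set G) := by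
      refine (Sylow.smul_eq_iff_mem_normalizer (P := P)).mp ?_
      have hmQ' : m • Q = Q := Sylow.smul_eq_iff_mem_normalizer.mpr hmQ
      rw [mul_smul, mul_smul, hQP, hmQ', hcQP]
    -- g * m⁻¹ centralizes x
    have hcen : g * m⁻¹ ∈ Subgroup.centralizer {x} := by
      rw [mem_centralizer_iff]
      rintro y hy
      rw [Set.mem_singleton_iff] at hy
      rw [hy]
      have h' : x * g = g * (m⁻¹ * x * m) := by
        rw [← hconj]; group
      calc x * (g * m⁻¹) = (x * g) * m⁻¹ := by group
        _ = g * (m⁻¹ * x * m) * m⁻¹ := by rw [h']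
        _ = g * m⁻¹ * x := by group
    have hcx : (c : G) ∈ Subgroup.centralizer {x} := by
      refine centralizer_le ?_ c.2
      simp only [Set.singleton_subset_iff, SetLike.mem_coe]
      exact mem_zpowers x
    have hgeq : g = (g * m⁻¹) * (c : G)⁻¹ * ((c : G) * m * (c : G)⁻¹) * (c : G) := by group
    have hCle : Subgroup.centralizer {x} ≤ Subgroup.centralizer {x} ⊔ Subgroup.normalizer ((P : Subgroup G) : Set G) :=
      le_sup_left
    have hNle : Subgroup.normalizer ((P : Subgroup G) : Set G) ≤
        Subgroup.centralizer {x} ⊔ Subgroup.normalizer ((P : Subgroup G) : Set G) := le_sup_right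
    rw [hgeq]
    exact mul_mem (mul_mem (mul_mem (hCle hcen) (inv_mem (hCle hcx))) (hNle hmn)) (hCle hcx)
  · apply sup_le
    · intro c hc
      apply Subgroup.subset_closure
      show IsSubnormalIn _ _
      have hcx : Commute x c := by
        rw [Subgroup.mem_centralizer_iff] at hc
        exact hc x rfl
      have hcl : Subgroup.closure ({c, x} : Set G) ≤ centralizer (zpowers x : Set G) := by
        rw [closure_le]
        intro y hy
        rw [SetLike.mem_coe, mem_centralizer_iff]
        rintro a ⟨k, rfl⟩
        have hxy : Commute x y := by
          rcases hy with h | h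
          · rw [h]; exact hcx
          · rw [Set.mem_singleton_iff] at h; rw [h]
        exact (hxy.zpow_left k).eq
      refine ⟨1, fun i => match i with
        | 0 => zpowers x
        | _ + 1 => Subgroup.closure {c, x}, rfl, rfl, ?_⟩
      intro i hi
      interval_cases i
      refine ⟨zpowers_le.mpr (Subgroup.subset_closure (Set.mem_insert_of_mem _ rfl)), ?_⟩
      intro g hg a ha
      have hcomm := (mem_centralizer_iff.mp (hcl hg)) a ha
      have e : g * a * g⁻¹ = a := by rw [← hcomm]; group
      rw [e]; exact ha
    · intro g hg
      apply Subgroup.subset_closure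
      show IsSubnormalIn _ _
      set H := Subgroup.closure ({g, x} : Set G) with hH
      have hHN : H ≤ Subgroup.normalizer ((P : Subgroup G) : Set G) := by
        rw [hH, closure_le]
        intro y hy
        rcases hy with h | h
        · rw [h]; exact hg
        · rw [Set.mem_singleton_iff] at h; rw [h]; exact le_normalizer hx
      refine ⟨2, fun i => match i with
        | 0 => zpowers x
        | 1 => (P : Subgroup G) ⊓ H
        | _ + 2 => H, rfl, rfl, ?_⟩
      intro i hi
      interval_cases i
      · refine ⟨le_inf (zpowers_le.mpr hx)
          (zpowers_le.mpr (Subgroup.subset_closure (Set.mem_insert_of_mem _ rfl))), ?_⟩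
        rintro q hq a ha
        have haP : a ∈ (P : Subgroup G) := (zpowers_le.mpr hx) ha
        have hcm := Subgroup.mul_comm_of_mem_isMulCommutative (P : Subgroup G)
          (Subgroup.mem_inf.mp hq).1 haP
        have e : q * a * q⁻¹ = a := by rw [hcm]; group
        rw [e]; exact ha
      · refine ⟨inf_le_right, ?_⟩
        rintro h' hh' q hq
        rw [Subgroup.mem_inf] at hq ⊢
        refine ⟨?_, mul_mem (mul_mem hh' hq.2) (inv_mem hh')⟩
        have hn' := hHN hh'
        rw [mem_normalizer_iff] at hn'
        exact (hn' q).mp hq.1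
end

section
/- Let G = H₁ × ⋯ × H_r be a direct product of finite groups and x = (x₁, …, x_r) ∈ G. Then Sub_G(x) = Sub_{H₁}(x₁) × ⋯ × Sub_{H_r}(x_r). In particular, a p-element x is picky in G if and only if each component x_i is picky in H_i. -/
variable {G : Type*} [Group G]

/-- Images of subnormal chains are subnormal. -/
theorem IsSubnormalIn.map {G' : Type*} [Group G'] {A B : Subgroup G} (f : G →* G')
    (h : IsSubnormalIn A B) : IsSubnormalIn (A.map f) (B.map f) := by
  obtain ⟨n, s, h0, hn, hstep⟩ := h
  refine ⟨n, fun k => (s k).map f, by simp only [h0], by simp only [hn], fun i hi => ?_⟩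
  obtain ⟨hle, hnorm⟩ := hstep i hi
  refine ⟨Subgroup.map_mono hle, ?_⟩
  intro g' hg' a' ha'
  rw [Subgroup.mem_map] at hg' ha' ⊢
  obtain ⟨g, hg, rfl⟩ := hg'
  obtain ⟨a, ha, rfl⟩ := ha'
  exact ⟨g * a * g⁻¹, hnorm g hg a ha, by simp⟩

section Pi

variable {ι : Type*} [DecidableEq ι] {H : ι → Type*} [∀ i, Group (H i)]

/-- Core lemma: a single-coordinate witness for the subnormalizer lifts to the product. -/
theorem mulSingle_subnormal (x : ∀ i, H i) (i : ι) (h : H i)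
    (hh : IsSubnormalIn (Subgroup.zpowers (x i)) (Subgroup.closure {h, x i})) :
    IsSubnormalIn (Subgroup.zpowers x) (Subgroup.closure {Pi.mulSingle i h, x}) := by
  obtain ⟨n, s, h0, hn, hstep⟩ := hh
  set e : (∀ j, H j) →* H i := Pi.evalMonoidHom H i with he
  set hs : ∀ j, H j := Pi.mulSingle i h with hhs
  set C : Subgroup (∀ j, H j) := Subgroup.closure {hs, x} with hC
  -- the lifted chain
  set t : ℕ → Subgroup (∀ j, H j) :=
    fun k => match k with
      | 0 => Subgroup.zpowers x
      | (k + 1) => C ⊓ (s k).comap e with ht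
  have hxC : Subgroup.zpowers x ≤ C :=
    Subgroup.zpowers_le.mpr (Subgroup.subset_closure (Set.mem_insert_of_mem _ rfl))
  -- every element of C has all coordinates j ≠ i in zpowers (x j)
  have hCme : ∀ g ∈ C, ∀ j, j ≠ i → g j ∈ Subgroup.zpowers (x j) := by
    intro g hg j hj
    suffices h2 : C ≤ Subgroup.pi {i}ᶜ fun j => Subgroup.zpowers (x j) by
      exact (Subgroup.mem_pi _).mp (h2 hg) j hj
    apply (Subgroup.closure_le _).mpr
    rintro a (rfl | rfl)
    · rw [SetLike.mem_coe, Subgroup.mem_pi]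
      intro j' hj'
      have : hs j' = 1 := Pi.mulSingle_eq_of_ne hj' _
      rw [this]; exact one_mem _
    · rw [SetLike.mem_coe, Subgroup.mem_pi]
      intro j' _
      exact Subgroup.mem_zpowers _
  refine ⟨n + 1, t, rfl, ?_, ?_⟩
  · show C ⊓ (s n).comap e = C
    rw [inf_eq_left, hn]
    apply (Subgroup.closure_le _).mpr
    rintro a (rfl | rfl)
    · rw [SetLike.mem_coe, Subgroup.mem_comap]
      have : e hs = h := Pi.mulSingle_eq_same i h
      rw [this]
      exact Subgroup.subset_closure (Set.mem_insert _ _)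
    · rw [SetLike.mem_coe, Subgroup.mem_comap]
      exact Subgroup.subset_closure (Set.mem_insert_of_mem _ rfl)
  · intro k hk
    match k with
    | 0 =>
      constructor
      · show Subgroup.zpowers x ≤ C ⊓ (s 0).comap e
        refine le_inf hxC ?_
        rw [h0]
        exact Subgroup.zpowers_le.mpr (Subgroup.mem_zpowers _)
      · -- normality of zpowers x in t 1 : everything lives in an abelian subgroup
        intro g hg a ha
        show g * a * g⁻¹ ∈ Subgroup.zpowers x
        rw [Subgroup.mem_inf] at hg
        obtain ⟨hgC, hge⟩ := hg
        have hgall : ∀ j, g j ∈ Subgroup.zpowers (x j) := by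
          intro j
          by_cases hji : j = i
          · subst hji
            rw [Subgroup.mem_comap, h0] at hge
            exact hge
          · exact hCme g hgC j hji
        obtain ⟨m, rfl⟩ := ha
        have hcomm : g * x ^ m = x ^ m * g := by
          funext j
          obtain ⟨c, hc⟩ := hgall j
          have hxm : (x ^ m) j = (x j) ^ m := rfl
          show g j * (x ^ m) j = (x ^ m) j * g j
          rw [hxm, ← hc]
          exact (Commute.refl (x j)).zpow_zpow c m
        rw [hcomm, mul_inv_cancel_right]
        exact Subgroup.zpow_mem_zpowers _ _
    | (k + 1) =>
      have hkn : k < n := by omega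
      obtain ⟨hle, hnorm⟩ := hstep k hkn
      constructor
      · show C ⊓ (s k).comap e ≤ C ⊓ (s (k + 1)).comap e
        exact inf_le_inf_left _ (Subgroup.comap_mono hle)
      · intro g hg a ha
        rw [Subgroup.mem_inf] at hg ha ⊢
        obtain ⟨hgC, hge⟩ := hg
        obtain ⟨haC, hae⟩ := ha
        refine ⟨mul_mem (mul_mem hgC haC) (inv_mem hgC), ?_⟩
        rw [Subgroup.mem_comap] at hge hae ⊢
        have : e (g * a * g⁻¹) = e g * e a * (e g)⁻¹ := by
          rw [map_mul, map_mul, map_inv]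
        rw [this]
        exact hnorm _ hge _ hae

/-- The subnormalizer of an element of a finite direct product is the direct product of the
subnormalizers of its components. -/
theorem subnormalizer_pi [Fintype ι] (x : ∀ i, H i) :
    subnormalizer x = Subgroup.pi Set.univ fun i => subnormalizer (x i) := by
  apply le_antisymm
  · apply (Subgroup.closure_le _).mpr
    intro g hg
    rw [SetLike.mem_coe, Subgroup.mem_pi]
    intro i _
    have h := IsSubnormalIn.map (Pi.evalMonoidHom H i) hg
    rw [MonoidHom.map_zpowers, MonoidHom.map_closure, Set.image_pair] at h
    exact Subgroup.subset_closure h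
  · intro g hg
    rw [Subgroup.mem_pi] at hg
    have single_mem : ∀ (i : ι) (y : H i), y ∈ subnormalizer (x i) →
        Pi.mulSingle i y ∈ subnormalizer x := by
      intro i y hy
      have hmap : (subnormalizer (x i)).map (MonoidHom.mulSingle H i) ≤ subnormalizer x := by
        rw [subnormalizer, MonoidHom.map_closure]
        apply (Subgroup.closure_le _).mpr
        rintro _ ⟨a, ha, rfl⟩
        exact Subgroup.subset_closure (mulSingle_subnormal x i a ha)
      exact hmap ⟨y, hy, rfl⟩
    rw [← Finset.noncommProd_mulSingle g]
    exact Subgroup.noncommProd_mem _ _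
      (fun i _ => single_mem i (g i) (hg i (Set.mem_univ i)))

variable {p : ℕ}

theorem map_pi_eval (K : ∀ i, Subgroup (H i)) (i : ι) :
    (Subgroup.pi Set.univ K).map (Pi.evalMonoidHom H i) = K i := by
  apply le_antisymm
  · rintro _ ⟨g, hg, rfl⟩
    exact hg i (Set.mem_univ i)
  · intro y hy
    have hmem : Pi.mulSingle i y ∈ Subgroup.pi Set.univ K := by
      rw [Subgroup.mem_pi]
      intro j _
      by_cases hji : j = i
      · subst hji; rw [Pi.mulSingle_eq_same]; exact hy
      · rw [Pi.mulSingle_eq_of_ne hji]; exact one_mem _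
    exact Subgroup.mem_map.mpr ⟨Pi.mulSingle i y, hmem, Pi.mulSingle_eq_same i y⟩

theorem le_pi_map (R : Subgroup (∀ i, H i)) :
    R ≤ Subgroup.pi Set.univ fun i => R.map (Pi.evalMonoidHom H i) := by
  intro r hr
  rw [Subgroup.mem_pi]
  intro i _
  exact Subgroup.mem_map.mpr ⟨r, hr, rfl⟩

theorem isPGroup_pi [Fintype ι] (K : ∀ i, Subgroup (H i))
    (hK : ∀ i, IsPGroup p (K i)) : IsPGroup p (Subgroup.pi Set.univ K) := by
  rintro ⟨g, hg⟩
  choose k hk using fun i => hK i ⟨g i, hg i (Set.mem_univ i)⟩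
  refine ⟨Finset.univ.sup k, ?_⟩
  have : ∀ i, (g i) ^ p ^ Finset.univ.sup k = 1 := by
    intro i
    have hki : k i ≤ Finset.univ.sup k := Finset.le_sup (Finset.mem_univ i)
    have h1 : (g i) ^ p ^ k i = 1 := by
      have := congrArg (Subtype.val) (hk i)
      simpa using this
    calc (g i) ^ p ^ Finset.univ.sup k
        = ((g i) ^ p ^ k i) ^ p ^ (Finset.univ.sup k - k i) := by
          rw [← pow_mul, ← pow_add, Nat.add_sub_cancel' hki]
      _ = 1 := by rw [h1, one_pow]
  ext j
  simpa using this j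

/-- The direct product of Sylow subgroups, as a Sylow subgroup of the direct product. -/
def Sylow.piMk [Fintype ι] (Q : ∀ i, Sylow p (H i)) : Sylow p (∀ i, H i) where
  toSubgroup := Subgroup.pi Set.univ fun i => (Q i : Subgroup (H i))
  isPGroup' := isPGroup_pi _ fun i => (Q i).isPGroup'
  is_maximal' := by
    intro R hR hle
    have hRi : ∀ i, R.map (Pi.evalMonoidHom H i) = (Q i : Subgroup (H i)) := by
      intro i
      refine (Q i).is_maximal' (hR.map _) ?_
      have := Subgroup.map_mono (f := Pi.evalMonoidHom H i) hle
      rwa [map_pi_eval] at this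
    apply le_antisymm _ hle
    refine le_trans (le_pi_map R) (le_of_eq ?_)
    congr 1
    funext i
    exact hRi i

theorem piMk_coe [Fintype ι] (Q : ∀ i, Sylow p (H i)) :
    (Sylow.piMk Q : Subgroup (∀ i, H i)) = Subgroup.pi Set.univ fun i => (Q i : Subgroup (H i)) :=
  rfl

/-- Every Sylow subgroup of a direct product is a direct product of Sylow subgroups. -/
theorem sylow_eq_pi [Fintype ι] (P : Sylow p (∀ i, H i)) :
    ∃ Q : ∀ i, Sylow p (H i),
      (P : Subgroup (∀ i, H i)) = Subgroup.pi Set.univ fun i => (Q i : Subgroup (H i)) := by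
  choose Q hQ using fun i => (P.isPGroup'.map (Pi.evalMonoidHom H i)).exists_le_sylow
  refine ⟨Q, ?_⟩
  have hle : (P : Subgroup (∀ i, H i)) ≤ Subgroup.pi Set.univ fun i => (Q i : Subgroup (H i)) := by
    refine le_trans (le_pi_map _) ?_
    intro r hr
    rw [Subgroup.mem_pi] at hr ⊢
    exact fun i hi => hQ i (hr i hi)
  exact (P.is_maximal' (isPGroup_pi _ fun i => (Q i).isPGroup') hle).symm

end Pi

theorem stmt_13 {ι : Type*} [Fintype ι] (H : ι → Type*) [∀ i, Group (H i)]
    [∀ i, Fintype (H i)] {p : ℕ} (hp : p.Prime) (x : ∀ i, H i) :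
    subnormalizer x = Subgroup.pi Set.univ (fun i => subnormalizer (x i)) ∧
    ((∃ k : ℕ, orderOf x = p ^ k) →
      ((∃! P : Sylow p (∀ i, H i), x ∈ P) ↔
        ∀ i, ∃! Q : Sylow p (H i), x i ∈ Q)) := by
  classical
  constructor
  · exact subnormalizer_pi x
  · intro _
    constructor
    · rintro ⟨P, hxP, huniq⟩ i
      obtain ⟨Q, hPQ⟩ := sylow_eq_pi P
      have hxpi : x ∈ Subgroup.pi Set.univ fun i => (Q i : Subgroup (H i)) := by
        rw [← hPQ]; exact hxP
      refine ⟨Q i, (Subgroup.mem_pi _).mp hxpi i (Set.mem_univ i), ?_⟩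
      intro R hR
      set Q' : ∀ j, Sylow p (H j) := Function.update Q i R with hQ'
      have hxQ' : x ∈ Sylow.piMk Q' := by
        show x ∈ Subgroup.pi Set.univ fun j => (Q' j : Subgroup (H j))
        rw [Subgroup.mem_pi]
        intro j _
        by_cases hji : j = i
        · subst hji
          show x j ∈ (Q' j : Subgroup (H j))
          rw [hQ', Function.update_self]
          exact hR
        · show x j ∈ (Q' j : Subgroup (H j))
          rw [hQ', Function.update_of_ne hji]
          exact (Subgroup.mem_pi _).mp hxpi j (Set.mem_univ j)
      have hPP : Sylow.piMk Q' = P := huniq _ hxQ'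
      have hsub : (Subgroup.pi Set.univ fun j => (Q' j : Subgroup (H j)))
          = Subgroup.pi Set.univ fun j => (Q j : Subgroup (H j)) := by
        have := congrArg (fun (S : Sylow p (∀ j, H j)) => (S : Subgroup (∀ j, H j))) hPP
        simpa [piMk_coe, hPQ] using this
      have := congrArg (fun S => Subgroup.map (Pi.evalMonoidHom H i) S) hsub
      simp only [map_pi_eval] at this
      apply Sylow.ext
      rw [← this, hQ', Function.update_self]
    · intro hall
      choose Q hmem huni using hall
      have hxP0 : x ∈ Sylow.piMk Q := by
        show x ∈ Subgroup.pi Set.univ fun j => (Q j : Subgroup (H j))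
        rw [Subgroup.mem_pi]
        exact fun i _ => hmem i
      refine ⟨Sylow.piMk Q, hxP0, ?_⟩
      intro P hxP
      obtain ⟨Q'', hPQ⟩ := sylow_eq_pi P
      have hQi : ∀ i, Q'' i = Q i := by
        intro i
        apply huni
        have : x ∈ Subgroup.pi Set.univ fun j => (Q'' j : Subgroup (H j)) := by
          rw [← hPQ]; exact hxP
        exact (Subgroup.mem_pi _).mp this i (Set.mem_univ i)
      apply Sylow.ext
      rw [hPQ, piMk_coe]
      congr 1
      funext i
      rw [hQi]
end

section
/- Let G be a finite group, p a prime, x a p-element of G contained in a Sylow p-subgroup P, and H ≤ G a subgroup containing N_G(P). Suppose that for all g ∈ G, x ∈ Hᵍ implies Hᵍ = H. Then Sub_G(x) ≤ H. If moreover ⟨x⟩ is subnormal in H, then Sub_G(x) = H. -/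
variable {G : Type*} [Group G]

namespace SubnAux

open Subgroup

/-- A subnormal chain of fixed length. -/
def Chain (n : ℕ) (A B : Subgroup G) : Prop :=
  ∃ s : ℕ → Subgroup G, s 0 = A ∧ s n = B ∧
    ∀ i < n, s i ≤ s (i + 1) ∧ ∀ g ∈ s (i + 1), ∀ a ∈ s i, g * a * g⁻¹ ∈ s i

lemma isSubnormalIn_iff {A B : Subgroup G} : IsSubnormalIn A B ↔ ∃ n, Chain n A B := by
  constructor
  · rintro ⟨n, s, h⟩; exact ⟨n, s, h⟩
  · rintro ⟨n, s, h⟩; exact ⟨n, s, h⟩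

lemma Chain.le {n : ℕ} {A B : Subgroup G} (h : Chain n A B) : A ≤ B := by
  obtain ⟨s, h0, hn, hstep⟩ := h
  have key : ∀ i, i ≤ n → s 0 ≤ s i := by
    intro i
    induction i with
    | zero => intro _; exact le_rfl
    | succ k ih =>
      intro hk
      exact (ih (Nat.le_of_succ_le hk)).trans (hstep k (Nat.lt_of_succ_le hk)).1
  rw [← h0, ← hn]
  exact key n le_rfl

/-- conjugating monoid homs compose. -/
lemma conj_comp (g h : G) :
    (MulAut.conj g).toMonoidHom.comp (MulAut.conj h).toMonoidHom
      = (MulAut.conj (g * h)).toMonoidHom := by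
  ext x
  simp [mul_assoc]

lemma Chain.map_conj {n : ℕ} {A B : Subgroup G} (h : Chain n A B) (g : G) :
    Chain n (A.map (MulAut.conj g).toMonoidHom) (B.map (MulAut.conj g).toMonoidHom) := by
  obtain ⟨s, h0, hn, hstep⟩ := h
  refine ⟨fun i => (s i).map (MulAut.conj g).toMonoidHom, by simp only [h0], by simp only [hn], ?_⟩
  intro i hi
  refine ⟨Subgroup.map_mono (hstep i hi).1, ?_⟩
  rintro - ⟨b, hb, rfl⟩ - ⟨a, ha, rfl⟩
  refine ⟨b * a * b⁻¹, (hstep i hi).2 b hb a ha, ?_⟩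
  simp only [MulEquiv.coe_toMonoidHom, MulAut.conj_apply]
  group

/-- The "conjugate closure" of `A` by elements of `B`. -/
def conjSup (A B : Subgroup G) : Subgroup G :=
  ⨆ g ∈ B, A.map (MulAut.conj g).toMonoidHom

lemma map_le_conjSup {A B : Subgroup G} {g : G} (hg : g ∈ B) :
    A.map (MulAut.conj g).toMonoidHom ≤ conjSup A B :=
  le_iSup₂ (f := fun g (_ : g ∈ B) => A.map (MulAut.conj g).toMonoidHom) g hg

lemma le_conjSup {A B : Subgroup G} : A ≤ conjSup A B := by
  intro a ha
  exact map_le_conjSup (A := A) B.one_mem ⟨a, ha, by simp⟩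

lemma conjSup_le {A B : Subgroup G} (hAB : A ≤ B) : conjSup A B ≤ B := by
  refine iSup₂_le fun g hg => ?_
  rintro - ⟨a, ha, rfl⟩
  simp only [MulEquiv.coe_toMonoidHom, MulAut.conj_apply]
  exact B.mul_mem (B.mul_mem hg (hAB ha)) (B.inv_mem hg)

lemma map_conjSup {A B : Subgroup G} {m : G} (hm : m ∈ B) :
    (conjSup A B).map (MulAut.conj m).toMonoidHom = conjSup A B := by
  unfold conjSup
  rw [Subgroup.map_iSup]
  have key : ∀ g : G, (⨆ _ : g ∈ B, A.map (MulAut.conj g).toMonoidHom).map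
      (MulAut.conj m).toMonoidHom = ⨆ _ : g ∈ B, A.map (MulAut.conj (m * g)).toMonoidHom := by
    intro g
    by_cases hg : g ∈ B
    · simp only [hg, iSup_pos, Subgroup.map_map, conj_comp]
    · simp [hg]
  simp_rw [key]
  apply le_antisymm
  · refine iSup_le fun g => iSup_le fun hg => ?_
    exact map_le_conjSup (B.mul_mem hm hg)
  · refine iSup₂_le fun g hg => ?_
    have : g = m * (m⁻¹ * g) := by group
    rw [this]
    have hg' : m⁻¹ * g ∈ B := B.mul_mem (B.inv_mem hm) hg
    exact le_trans (le_iSup_of_le (m⁻¹ * g) (by simp [hg'])) le_rfl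

lemma conjSup_normalized {A B : Subgroup G} : B ≤ Subgroup.normalizer (conjSup A B : Set G) := by
  intro m hm
  rw [Subgroup.mem_normalizer_iff]
  intro h
  constructor
  · intro hh
    rw [← map_conjSup (A := A) hm]
    exact ⟨h, hh, rfl⟩
  · intro hh
    rw [← map_conjSup (A := A) hm] at hh
    obtain ⟨y, hy, hy2⟩ := hh
    simp only [MulEquiv.coe_toMonoidHom, MulAut.conj_apply] at hy2
    have : y = h := mul_left_cancel (mul_right_cancel hy2)
    rwa [← this]

lemma finsup_pgroup {p : ℕ} (M : Subgroup G) (f : G → Subgroup G) (s : Finset G)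
    (hf : ∀ g ∈ s, IsPGroup p (f g) ∧ f g ≤ M ∧ M ≤ Subgroup.normalizer (f g : Set G)) :
    IsPGroup p ↥(s.sup f) ∧ s.sup f ≤ M := by
  classical
  induction s using Finset.cons_induction with
  | empty => rw [Finset.sup_empty]; exact ⟨IsPGroup.of_bot, bot_le⟩
  | cons a s ha ih =>
    have hIH := ih fun g hg => hf g (Finset.mem_cons_of_mem hg)
    have hfa := hf a (Finset.mem_cons_self a s)
    rw [Finset.sup_cons]
    constructor
    · exact IsPGroup.to_sup_of_normal_left' hfa.1 hIH.1 (hIH.2.trans hfa.2.2)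
    · exact sup_le hfa.2.1 hIH.2

lemma chain_pgroup [Fintype G] {p : ℕ} :
    ∀ n (A B : Subgroup G), IsPGroup p A → Chain n A B → IsPGroup p ↥(conjSup A B) := by
  classical
  intro n
  induction n with
  | zero =>
    intro A B hA hch
    obtain ⟨s, h0, hn, -⟩ := hch
    have hBA : B = A := by rw [← h0, ← hn]
    have : conjSup A B = A := by
      rw [hBA]
      exact le_antisymm (conjSup_le le_rfl) le_conjSup
    rwa [this]
  | succ n ih =>
    intro A B hA hch
    obtain ⟨s, h0, hn, hstep⟩ := hch
    set M := s n with hM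
    have hMB : M ≤ B := by rw [← hn]; exact (hstep n (Nat.lt_succ_self n)).1
    have hMnorm : ∀ g ∈ B, ∀ m ∈ M, g * m * g⁻¹ ∈ M := by
      intro g hg m hm
      exact (hstep n (Nat.lt_succ_self n)).2 g (hn ▸ hg) m hm
    have hchainAM : Chain n A M := ⟨s, h0, rfl, fun i hi => hstep i (hi.trans (Nat.lt_succ_self n))⟩
    have hAM : A ≤ M := hchainAM.le
    -- M is invariant under conjugation by elements of B
    have hMg : ∀ g ∈ B, M.map (MulAut.conj g).toMonoidHom = M := by
      intro g hg
      apply le_antisymm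
      · rintro - ⟨m, hm, rfl⟩
        exact hMnorm g hg m hm
      · intro m hm
        refine ⟨g⁻¹ * m * g, by simpa using hMnorm g⁻¹ (B.inv_mem hg) m hm, ?_⟩
        simp only [MulEquiv.coe_toMonoidHom, MulAut.conj_apply]
        group
    -- the family of normal closures in M of the conjugates of A
    set C : G → Subgroup G := fun g => conjSup (A.map (MulAut.conj g).toMonoidHom) M with hC
    have hCfacts : ∀ g ∈ B, IsPGroup p (C g) ∧ C g ≤ M ∧ M ≤ Subgroup.normalizer (C g : Set G) := by
      intro g hg
      have hchg : Chain n (A.map (MulAut.conj g).toMonoidHom) M := by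
        have := hchainAM.map_conj g
        rwa [hMg g hg] at this
      refine ⟨ih _ _ (hA.map _) hchg, conjSup_le hchg.le, conjSup_normalized⟩
    have hTfacts := finsup_pgroup M C (Finset.univ.filter (· ∈ B))
      (fun g hg => hCfacts g (Finset.mem_filter.mp hg).2)
    refine IsPGroup.to_le hTfacts.1 ?_
    refine iSup₂_le fun g hg => ?_
    exact le_trans (le_conjSup (B := M))
      (Finset.le_sup (f := C) (Finset.mem_filter.mpr ⟨Finset.mem_univ g, hg⟩))

/-- If `N_G(P) ≤ H` for a Sylow `p`-subgroup `P`, then `H` is self-normalizing. -/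
lemma self_normalizing [Fintype G] {p : ℕ} (hp : p.Prime) (P : Sylow p G)
    (H : Subgroup G) (hNH : Subgroup.normalizer ((P : Subgroup G) : Set G) ≤ H) :
    Subgroup.normalizer (H : Set G) ≤ H := by
  haveI : Fact p.Prime := ⟨hp⟩
  haveI : Finite (Sylow p G) :=
    Finite.of_injective (fun Q : Sylow p G => (Q : Subgroup G))
      (fun Q R h => Sylow.ext h)
  intro n hn
  have hPH : (P : Subgroup G) ≤ H := Subgroup.le_normalizer.trans hNH
  set Q : Sylow p G := n • P with hQ
  have hQH : (Q : Subgroup G) ≤ H := by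
    rw [hQ, Sylow.coe_subgroup_smul, Subgroup.pointwise_smul_def]
    rintro - ⟨g, hg, rfl⟩
    exact ((Subgroup.mem_normalizer_iff.mp hn) g).mp (hPH hg)
  obtain ⟨h, hh⟩ := MulAction.exists_smul_eq (↥H) (Q.subtype hQH) (P.subtype hPH)
  rw [Sylow.smul_subtype hQH h] at hh
  have hsmul : (h : G) • Q = P := Sylow.subtype_injective hh
  have : ((h : G) * n) • P = P := by rw [mul_smul, ← hQ, hsmul]
  have hmem : (h : G) * n ∈ Subgroup.normalizer ((P : Subgroup G) : Set G) :=
    Sylow.smul_eq_iff_mem_normalizer.mp this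
  have : (h : G) * n ∈ H := hNH hmem
  simpa using H.mul_mem (H.inv_mem h.2) this

end SubnAux

theorem stmt_14 [Fintype G] {p : ℕ} (hp : p.Prime)
    (P : Sylow p G) (x : G) (hxP : x ∈ P) (hx : ∃ k : ℕ, orderOf x = p ^ k)
    (H : Subgroup G) (hNH : Subgroup.normalizer ((P : Subgroup G) : Set G) ≤ H)
    (hconj : ∀ g : G, x ∈ H.map (MulAut.conj g).toMonoidHom →
      H.map (MulAut.conj g).toMonoidHom = H) :
    subnormalizer x ≤ H ∧
      (IsSubnormalIn (Subgroup.zpowers x) H → subnormalizer x = H) := by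
  classical
  haveI : Fact p.Prime := ⟨hp⟩
  haveI : Finite (Sylow p G) :=
    Finite.of_injective (fun Q : Sylow p G => (Q : Subgroup G))
      (fun Q R h => Sylow.ext h)
  obtain ⟨k, hk⟩ := hx
  have hxpg : IsPGroup p (Subgroup.zpowers x) :=
    IsPGroup.of_card (by rw [Nat.card_zpowers, hk])
  have hxH : x ∈ H := hNH (Subgroup.le_normalizer (hxP))
  -- Key claim: any conjugate of H containing a p-subgroup's elements...
  -- First: `subnormalizer x ≤ H`.
  have hmain : subnormalizer x ≤ H := by
    rw [subnormalizer, Subgroup.closure_le]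
    intro g hg
    replace hg : IsSubnormalIn (Subgroup.zpowers x) (Subgroup.closure {g, x}) := hg
    set K : Subgroup G := Subgroup.closure {g, x} with hK
    obtain ⟨n, hch⟩ := SubnAux.isSubnormalIn_iff.mp hg
    -- the normal closure N of ⟨x⟩ in K is a p-group
    set N : Subgroup G := SubnAux.conjSup (Subgroup.zpowers x) K with hN
    have hNpg : IsPGroup p N := SubnAux.chain_pgroup n _ _ hxpg hch
    -- N is contained in some Sylow p-subgroup R of G
    obtain ⟨R, hNR⟩ := hNpg.exists_le_sylow
    -- R = a • P for some a, and x ∈ N ≤ R ≤ a • H, so conjugate of H containing x equals H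
    obtain ⟨a, ha⟩ := MulAction.exists_smul_eq G P R
    have hxN : x ∈ N := SubnAux.le_conjSup (Subgroup.mem_zpowers x)
    have hRmap : (R : Subgroup G) ≤ H.map (MulAut.conj a).toMonoidHom := by
      rw [← ha, Sylow.coe_subgroup_smul, Subgroup.pointwise_smul_def]
      exact Subgroup.map_mono (Subgroup.le_normalizer.trans hNH)
    have hxmap : x ∈ H.map (MulAut.conj a).toMonoidHom := hRmap (hNR hxN)
    have hNH' : N ≤ H := by
      intro y hy
      have : y ∈ H.map (MulAut.conj a).toMonoidHom := hRmap (hNR hy)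
      rwa [hconj a hxmap] at this
    -- every element of K normalizes H
    have hKnorm : ∀ c ∈ K, H.map (MulAut.conj c).toMonoidHom = H := by
      intro c hc
      apply hconj
      refine ⟨c⁻¹ * x * c, ?_, ?_⟩
      · have : c⁻¹ * x * c ∈ N := by
          have hx' : x ∈ Subgroup.zpowers x := Subgroup.mem_zpowers x
          have := SubnAux.map_le_conjSup (A := Subgroup.zpowers x) (K.inv_mem hc)
            ⟨x, hx', rfl⟩
          simpa [mul_assoc] using this
        exact hNH' this
      · simp only [MulEquiv.coe_toMonoidHom, MulAut.conj_apply]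
        group
    have hgK : g ∈ K := Subgroup.subset_closure (by simp)
    have hgnorm : g ∈ Subgroup.normalizer (H : Set G) := by
      rw [Subgroup.mem_normalizer_iff]
      intro h
      constructor
      · intro hh
        rw [← hKnorm g hgK]
        exact ⟨h, hh, rfl⟩
      · intro hh
        rw [← hKnorm g hgK] at hh
        obtain ⟨y, hy, hy2⟩ := hh
        simp only [MulEquiv.coe_toMonoidHom, MulAut.conj_apply] at hy2
        have : y = h := mul_left_cancel (mul_right_cancel hy2)
        rwa [← this]
    exact SubnAux.self_normalizing hp P H hNH hgnorm
  refine ⟨hmain, fun hsub => le_antisymm hmain ?_⟩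
  -- H ≤ subnormalizer x, given ⟨x⟩ subnormal in H
  intro h hh
  apply Subgroup.subset_closure
  simp only [Set.mem_setOf_eq]
  -- ⟨x⟩ is subnormal in closure {h, x} ≤ H
  obtain ⟨n, s, h0, hn, hstep⟩ := hsub
  set C : Subgroup G := Subgroup.closure {h, x} with hC
  have hCH : C ≤ H := by
    rw [hC, Subgroup.closure_le]
    rintro y hy
    rcases hy with rfl | rfl
    · exact hh
    · exact hxH
  have hxC : Subgroup.zpowers x ≤ C := by
    rw [Subgroup.zpowers_le]
    exact Subgroup.subset_closure (by simp)
  refine ⟨n, fun i => s i ⊓ C, ?_, ?_, ?_⟩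
  · show s 0 ⊓ C = _
    rw [h0, inf_eq_left]; exact hxC
  · show s n ⊓ C = _
    rw [hn, inf_eq_right]; exact hCH
  · intro i hi
    refine ⟨inf_le_inf_right C (hstep i hi).1, ?_⟩
    rintro g ⟨hg1, hg2⟩ a ⟨ha1, ha2⟩
    exact ⟨(hstep i hi).2 g hg1 a ha1, C.mul_mem (C.mul_mem hg2 ha2) (C.inv_mem hg2)⟩
end

section
/- Let G be a finite group, p a prime, and x ∈ G a p-element. Then Sub_G(x) is generated by the normalizers N_G(Q) of the radical p-subgroups Q of G that contain x. -/
variable {G : Type*} [Group G]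

open Subgroup

section Helpers

lemma conj_mem_of_mem_normalizer' {Q : Subgroup G} {k m : G}
    (hk : k ∈ Subgroup.normalizer (Q : Set G)) (hm : m ∈ Q) : k * m * k⁻¹ ∈ Q :=
  (Subgroup.mem_normalizer_iff.mp hk m).mp hm

lemma le_normalizer_of_conj' {M K : Subgroup G}
    (hnorm : ∀ k ∈ K, ∀ m ∈ M, k * m * k⁻¹ ∈ M) : K ≤ Subgroup.normalizer (M : Set G) := by
  intro k hk
  rw [Subgroup.mem_normalizer_iff]
  intro m
  constructor
  · exact fun hm => hnorm k hk m hm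
  · intro hm
    have h2 := hnorm k⁻¹ (inv_mem hk) _ hm
    have : k⁻¹ * (k * m * k⁻¹) * k⁻¹⁻¹ = m := by group
    rwa [this] at h2

lemma conj_conj_mem' {Q : Subgroup G} {k h m : G} (hk : k ∈ Subgroup.normalizer (Q : Set G))
    (hh : h ∈ Subgroup.normalizer (Q : Set G)) (hm : m ∈ Q) : (k * h * k⁻¹) * m * (k * h * k⁻¹)⁻¹ ∈ Q := by
  have h1 : k⁻¹ * m * k⁻¹⁻¹ ∈ Q := conj_mem_of_mem_normalizer' (inv_mem hk) hm
  have h2 : h * (k⁻¹ * m * k⁻¹⁻¹) * h⁻¹ ∈ Q := conj_mem_of_mem_normalizer' hh h1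
  have h3 : k * (h * (k⁻¹ * m * k⁻¹⁻¹) * h⁻¹) * k⁻¹ ∈ Q := conj_mem_of_mem_normalizer' hk h2
  have he : (k * h * k⁻¹) * m * (k * h * k⁻¹)⁻¹ = k * (h * (k⁻¹ * m * k⁻¹⁻¹) * h⁻¹) * k⁻¹ := by
    group
  rwa [he]

lemma conj_mem_normalizer' {Q : Subgroup G} {k h : G} (hk : k ∈ Subgroup.normalizer (Q : Set G))
    (hh : h ∈ Subgroup.normalizer (Q : Set G)) : k * h * k⁻¹ ∈ Subgroup.normalizer (Q : Set G) := by
  rw [Subgroup.mem_normalizer_iff]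
  intro m
  constructor
  · exact fun hm => conj_conj_mem' hk hh hm
  · intro hm
    have h2 := conj_conj_mem' hk (inv_mem hh) hm
    have he : (k * h⁻¹ * k⁻¹) * ((k * h * k⁻¹) * m * (k * h * k⁻¹)⁻¹) * (k * h⁻¹ * k⁻¹)⁻¹ = m := by
      group
    rwa [he] at h2

lemma subgroup_card_lt' [Finite G] {A B : Subgroup G} (h : A < B) :
    Nat.card A < Nat.card B := by
  have h1 : (A : Set G) ⊂ (B : Set G) := SetLike.coe_ssubset_coe.mpr h
  have := Set.ncard_lt_ncard h1 (Set.toFinite _)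
  rwa [← Nat.card_coe_set_eq, ← Nat.card_coe_set_eq] at this

end Helpers

section OpCore

variable (p : ℕ)

/-- `P` is a maximal `p`-subgroup of `K` (a "Sylow `p`-subgroup of `K`" seen inside `G`). -/
def IsMaxP (K P : Subgroup G) : Prop :=
  IsPGroup p P ∧ P ≤ K ∧ ∀ Q : Subgroup G, IsPGroup p Q → Q ≤ K → P ≤ Q → Q = P

/-- The `p`-core of `K`, as a subgroup of `G`. -/
def OpC (K : Subgroup G) : Subgroup G := ⨅ (P : Subgroup G) (_ : IsMaxP p K P), P

variable {p}

lemma exists_isMaxP [Finite G] {M K : Subgroup G} (hM : IsPGroup p M) (hMK : M ≤ K) :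
    ∃ P : Subgroup G, IsMaxP p K P ∧ M ≤ P := by
  obtain ⟨P, ⟨hP1, hP2, hP3⟩, hmax⟩ :=
    Set.Finite.exists_maximalFor id {P : Subgroup G | IsPGroup p P ∧ P ≤ K ∧ M ≤ P}
      (Set.toFinite _) ⟨M, hM, hMK, le_rfl⟩
  refine ⟨P, ⟨hP1, hP2, fun Q hQ hQK hPQ => ?_⟩, hP3⟩
  exact le_antisymm (hmax ⟨hQ, hQK, hP3.trans hPQ⟩ hPQ) hPQ

lemma OpC_le_of_isMaxP {K P : Subgroup G} (hP : IsMaxP p K P) : OpC p K ≤ P :=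
  iInf_le_of_le P (iInf_le _ hP)

lemma mem_OpC {K : Subgroup G} {m : G} :
    m ∈ OpC p K ↔ ∀ P : Subgroup G, IsMaxP p K P → m ∈ P := by
  simp [OpC, Subgroup.mem_iInf]

lemma le_OpC [Finite G] {M K : Subgroup G} (hM : IsPGroup p M) (hMK : M ≤ K)
    (hnorm : ∀ k ∈ K, ∀ m ∈ M, k * m * k⁻¹ ∈ M) : M ≤ OpC p K := by
  refine le_iInf fun P => le_iInf fun hP => ?_
  have hPN : P ≤ Subgroup.normalizer (M : Set G) := hP.2.1.trans (le_normalizer_of_conj' hnorm)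
  have hsup : IsPGroup p (P ⊔ M : Subgroup G) := IsPGroup.to_sup_of_normal_right' hP.1 hM hPN
  have : P ⊔ M = P := hP.2.2 _ hsup (sup_le hP.2.1 hMK) le_sup_left
  exact le_sup_right.trans this.le

lemma OpC_le [Finite G] {K : Subgroup G} : OpC p K ≤ K := by
  obtain ⟨P, hP, -⟩ := exists_isMaxP (IsPGroup.of_bot (p := p)) (bot_le (a := K))
  exact (OpC_le_of_isMaxP hP).trans hP.2.1

lemma OpC_isPGroup [Finite G] {K : Subgroup G} : IsPGroup p (OpC p K) := by
  obtain ⟨P, hP, -⟩ := exists_isMaxP (IsPGroup.of_bot (p := p)) (bot_le (a := K))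
  exact hP.1.to_le (OpC_le_of_isMaxP hP)

lemma OpC_eq_self [Finite G] {K : Subgroup G} (hK : IsPGroup p K) : OpC p K = K :=
  le_antisymm OpC_le
    (le_OpC hK le_rfl (fun k hk m hm => mul_mem (mul_mem hk hm) (inv_mem hk)))

/-- conjugate of a subgroup -/
def conjS (g : G) (P : Subgroup G) : Subgroup G :=
  Subgroup.map ((MulAut.conj g).toMonoidHom) P

lemma mem_conjS {g a : G} {P : Subgroup G} : a ∈ conjS g P ↔ g⁻¹ * a * g ∈ P := by
  rw [conjS, Subgroup.mem_map_equiv]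
  simp [MulAut.conj]

lemma isPGroup_conjS {g : G} {P : Subgroup G} (hP : IsPGroup p P) : IsPGroup p (conjS g P) :=
  hP.map _

lemma isMaxP_conjS {g : G} {K P : Subgroup G}
    (hg : ∀ k ∈ K, g * k * g⁻¹ ∈ K) (hg' : ∀ k ∈ K, g⁻¹ * k * g ∈ K)
    (hP : IsMaxP p K P) : IsMaxP p K (conjS g P) := by
  refine ⟨isPGroup_conjS hP.1, ?_, ?_⟩
  · intro a ha
    rw [mem_conjS] at ha
    have := hg _ (hP.2.1 ha)
    have he : g * (g⁻¹ * a * g) * g⁻¹ = a := by group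
    rwa [he] at this
  · intro Q hQ hQK hPQ
    have hPle : P ≤ conjS g⁻¹ Q := by
      intro m hm
      rw [mem_conjS, inv_inv]
      exact hPQ (mem_conjS.mpr (by simpa [mul_assoc] using hm))
    have hQ' : conjS g⁻¹ Q = P := by
      refine hP.2.2 _ (isPGroup_conjS hQ) ?_ hPle
      intro a ha
      rw [mem_conjS, inv_inv] at ha
      have := hg' _ (hQK ha)
      have he : g⁻¹ * (g * a * g⁻¹) * g = a := by group
      rwa [he] at this
    apply le_antisymm _ hPQ
    intro q hq
    rw [mem_conjS]
    have : g⁻¹ * q * g ∈ conjS g⁻¹ Q := by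
      rw [mem_conjS, inv_inv]
      have he : g * (g⁻¹ * q * g) * g⁻¹ = q := by group
      rwa [he]
    rw [hQ'] at this
    exact this

lemma OpC_conj_mem {g : G} {K : Subgroup G}
    (hg : ∀ k ∈ K, g * k * g⁻¹ ∈ K) (hg' : ∀ k ∈ K, g⁻¹ * k * g ∈ K)
    {m : G} (hm : m ∈ OpC p K) : g * m * g⁻¹ ∈ OpC p K := by
  rw [mem_OpC] at hm ⊢
  intro P hP
  have hmax : IsMaxP p K (conjS g⁻¹ P) := by
    refine isMaxP_conjS (by simpa using hg') (by simpa using hg) hP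
  have := hm _ hmax
  rw [mem_conjS, inv_inv] at this
  exact this

lemma OpC_le_OpC [Finite G] {K L : Subgroup G} (hKL : K ≤ L)
    (hn : ∀ l ∈ L, ∀ k ∈ K, l * k * l⁻¹ ∈ K) : OpC p K ≤ OpC p L := by
  refine le_OpC OpC_isPGroup (OpC_le.trans hKL) ?_
  intro l hl m hm
  refine OpC_conj_mem (fun k hk => hn l hl k hk) (fun k hk => ?_) hm
  have := hn l⁻¹ (inv_mem hl) k hk
  rwa [inv_inv] at this

lemma OpC_conj_self [Finite G] {K : Subgroup G} {k : G} (hk : k ∈ K)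
    {m : G} (hm : m ∈ OpC p K) : k * m * k⁻¹ ∈ OpC p K := by
  refine OpC_conj_mem (fun a ha => mul_mem (mul_mem hk ha) (inv_mem hk))
    (fun a ha => mul_mem (mul_mem (inv_mem hk) ha) hk) hm

end OpCore

/-- `Q` is a radical `p`-subgroup: `Q = O_p(N_G(Q))`, i.e. `Q` is a `p`-subgroup
containing every normal `p`-subgroup of its normaliser. -/
def IsRadicalPSubgroup (p : ℕ) (Q : Subgroup G) : Prop :=
  IsPGroup p Q ∧ ∀ M : Subgroup G, M ≤ Subgroup.normalizer (Q : Set G) → IsPGroup p M →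
    (∀ h ∈ Subgroup.normalizer (Q : Set G), ∀ m ∈ M, h * m * h⁻¹ ∈ M) → M ≤ Q

section Main

variable {p : ℕ}

lemma mem_OpC_of_subnormal [Finite G] {x : G} (hx : IsPGroup p (Subgroup.zpowers x))
    {H : Subgroup G} (h : IsSubnormalIn (Subgroup.zpowers x) H) : x ∈ OpC p H := by
  obtain ⟨n, s, h0, hn, hstep⟩ := h
  suffices hgen : ∀ i, i ≤ n → x ∈ OpC p (s i) by
    rw [← hn]; exact hgen n le_rfl
  intro i
  induction i with
  | zero =>
    intro _
    rw [h0, OpC_eq_self hx]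
    exact Subgroup.mem_zpowers x
  | succ i ih =>
    intro hi
    have hilt : i < n := by omega
    exact OpC_le_OpC (hstep i hilt).1 (fun l hl k hk => (hstep i hilt).2 l hl k hk)
      (ih (by omega))

lemma normalizer_le_normalizer_OpC [Finite G] {Q : Subgroup G} :
    Subgroup.normalizer (Q : Set G) ≤ Subgroup.normalizer (OpC p (Subgroup.normalizer (Q : Set G)) : Set G) := by
  intro k hk
  rw [Subgroup.mem_normalizer_iff]
  intro m
  constructor
  · intro hm
    exact OpC_conj_mem (fun a ha => conj_mem_normalizer' hk ha)
      (fun a ha => by simpa using conj_mem_normalizer' (inv_mem hk) ha) hm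
  · intro hm
    have := OpC_conj_mem (p := p) (g := k⁻¹)
      (fun a ha => conj_mem_normalizer' (inv_mem hk) ha)
      (fun a ha => by simpa using conj_mem_normalizer' hk ha) hm
    have he : k⁻¹ * (k * m * k⁻¹) * k⁻¹⁻¹ = m := by group
    rwa [he] at this

lemma le_OpC_normalizer [Finite G] {Q : Subgroup G} (hQ : IsPGroup p Q) :
    Q ≤ OpC p (Subgroup.normalizer (Q : Set G)) :=
  le_OpC hQ Subgroup.le_normalizer (fun k hk m hm => conj_mem_of_mem_normalizer' hk hm)

lemma exists_radical_aux [Finite G] {x : G} :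
    ∀ n : ℕ, ∀ Q : Subgroup G, Nat.card G < Nat.card Q + n → IsPGroup p Q → x ∈ Q →
    ∃ R : Subgroup G, IsRadicalPSubgroup p R ∧ x ∈ R ∧ Subgroup.normalizer (Q : Set G) ≤ Subgroup.normalizer (R : Set G) := by
  intro n
  induction n with
  | zero =>
    intro Q hcard _ _
    exact absurd (Subgroup.card_le_card_group Q) (by omega)
  | succ n ih =>
    intro Q hcard hQ hxQ
    by_cases hfix : OpC p (Subgroup.normalizer (Q : Set G)) = Q
    · refine ⟨Q, ⟨hQ, fun M hM1 hM2 hM3 => ?_⟩, hxQ, le_rfl⟩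
      calc M ≤ OpC p (Subgroup.normalizer (Q : Set G)) := le_OpC hM2 hM1 hM3
        _ = Q := hfix
    · have hlt : Q < OpC p (Subgroup.normalizer (Q : Set G)) :=
        lt_of_le_of_ne (le_OpC_normalizer hQ) (Ne.symm hfix)
      obtain ⟨R, hR, hxR, hle⟩ := ih (OpC p (Subgroup.normalizer (Q : Set G)))
        (by have := subgroup_card_lt' hlt; omega) OpC_isPGroup ((le_OpC_normalizer hQ) hxQ)
      exact ⟨R, hR, hxR, normalizer_le_normalizer_OpC.trans hle⟩

end Main

section Reverse

variable {p : ℕ}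

lemma lt_relative_normalizer [Finite G] (hp : p.Prime) {Q' T : Subgroup G}
    (hQ' : IsPGroup p Q') (hT : T ≤ Q') (hne : T ≠ Q') : T < Q' ⊓ Subgroup.normalizer (T : Set G) := by
  haveI : Fact p.Prime := ⟨hp⟩
  have hnilp : Group.IsNilpotent Q' := hQ'.isNilpotent
  have hnc : NormalizerCondition Q' := normalizerCondition_of_isNilpotent
  set T' : Subgroup Q' := T.subgroupOf Q' with hT'
  have hT'top : T' < ⊤ := by
    rw [lt_top_iff_ne_top]
    intro htop
    exact hne (le_antisymm hT (Subgroup.subgroupOf_eq_top.mp htop))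
  have hlt := hnc T' hT'top
  obtain ⟨q', hq'N, hq'T⟩ := SetLike.exists_of_lt hlt
  refine lt_of_le_of_ne (le_inf hT Subgroup.le_normalizer) ?_
  intro heq
  apply hq'T
  have hqT : (q' : G) ∈ T := by
    have hqmem : (q' : G) ∈ Q' ⊓ Subgroup.normalizer (T : Set G) := by
      rw [Subgroup.mem_inf]
      refine ⟨q'.2, ?_⟩
      rw [Subgroup.mem_normalizer_iff]
      intro y
      constructor
      · intro hy
        have hyQ : y ∈ Q' := hT hy
        have := (Subgroup.mem_normalizer_iff.mp hq'N ⟨y, hyQ⟩).mp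
          (Subgroup.mem_subgroupOf.mpr hy)
        rw [Subgroup.mem_subgroupOf] at this
        exact this
      · intro hy
        have hyQ : y ∈ Q' := by
          have h1 : (q' : G) * y * (q' : G)⁻¹ ∈ Q' := hT hy
          have h2 : (q' : G)⁻¹ * ((q' : G) * y * (q' : G)⁻¹) * (q' : G) ∈ Q' :=
            mul_mem (mul_mem (inv_mem q'.2) h1) q'.2
          have he : (q' : G)⁻¹ * ((q' : G) * y * (q' : G)⁻¹) * (q' : G) = y := by group
          rwa [he] at h2
        have := (Subgroup.mem_normalizer_iff.mp hq'N ⟨y, hyQ⟩).mpr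
          (Subgroup.mem_subgroupOf.mpr (by exact hy))
        rw [Subgroup.mem_subgroupOf] at this
        exact this
    rw [← heq] at hqmem
    exact hqmem
  exact Subgroup.mem_subgroupOf.mpr hqT

lemma subnormal_of_mem_normalizer [Finite G] (hp : p.Prime) {Q : Subgroup G}
    (hQ : IsPGroup p Q) {x g : G} (hxQ : x ∈ Q) (hg : g ∈ Subgroup.normalizer (Q : Set G)) :
    IsSubnormalIn (Subgroup.zpowers x) (Subgroup.closure {g, x}) := by
  set H := Subgroup.closure ({g, x} : Set G) with hH
  have hxH : x ∈ H := Subgroup.subset_closure (by simp)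
  have hHN : H ≤ Subgroup.normalizer (Q : Set G) := by
    rw [hH, Subgroup.closure_le]
    rintro y (rfl | rfl)
    · exact hg
    · exact Subgroup.le_normalizer hxQ
  set Q' : Subgroup G := Q ⊓ H with hQ'def
  have hQ'p : IsPGroup p Q' := hQ.to_le inf_le_left
  have hxQ' : x ∈ Q' := Subgroup.mem_inf.mpr ⟨hxQ, hxH⟩
  have hQ'norm : ∀ h ∈ H, ∀ m ∈ Q', h * m * h⁻¹ ∈ Q' := by
    intro h hh m hm
    rw [Subgroup.mem_inf] at hm ⊢
    exact ⟨conj_mem_of_mem_normalizer' (hHN hh) hm.1, mul_mem (mul_mem hh hm.2) (inv_mem hh)⟩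
  -- the ascending chain inside Q'
  set c : ℕ → Subgroup G := fun k => Nat.rec (Subgroup.zpowers x) (fun _ T => Q' ⊓ Subgroup.normalizer (T : Set G)) k
    with hc
  have hc0 : c 0 = Subgroup.zpowers x := rfl
  have hcsucc : ∀ k, c (k + 1) = Q' ⊓ Subgroup.normalizer (c k : Set G) := fun k => rfl
  have hcle : ∀ k, c k ≤ Q' := by
    intro k
    cases k with
    | zero => exact Subgroup.zpowers_le.mpr hxQ'
    | succ k => rw [hcsucc]; exact inf_le_left
  have hcmono : ∀ k, c k ≤ c (k + 1) := fun k =>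
    le_inf (hcle k) Subgroup.le_normalizer
  have hcconj : ∀ k, ∀ g' ∈ c (k + 1), ∀ a ∈ c k, g' * a * g'⁻¹ ∈ c k := by
    intro k g' hg' a ha
    rw [hcsucc, Subgroup.mem_inf] at hg'
    exact conj_mem_of_mem_normalizer' hg'.2 ha
  have hstab : ∀ k, c k = Q' → c (k + 1) = Q' := by
    intro k hk
    rw [hcsucc, hk]
    exact le_antisymm inf_le_left (le_inf le_rfl Subgroup.le_normalizer)
  have hreach : ∀ k, c k = Q' ∨ k < Nat.card (c k) := by
    intro k
    induction k with
    | zero => exact Or.inr Nat.card_pos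
    | succ k ih =>
      rcases ih with h | h
      · exact Or.inl (hstab k h)
      · by_cases hk : c k = Q'
        · exact Or.inl (hstab k hk)
        · have hlt : c k < c (k + 1) := by
            rw [hcsucc]
            exact lt_relative_normalizer hp hQ'p (hcle k) hk
          have := subgroup_card_lt' hlt
          exact Or.inr (by omega)
  set K := Nat.card G with hK
  have hcK : c K = Q' := by
    rcases hreach K with h | h
    · exact h
    · exact absurd (Subgroup.card_le_card_group (c K)) (by omega)
  refine ⟨K + 1, fun i => if i ≤ K then c i else H, by simp [hc0], by simp, ?_⟩
  intro i hi
  by_cases hiK : i + 1 ≤ K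
  · have hiK' : i ≤ K := by omega
    simp only [if_pos hiK, if_pos hiK']
    exact ⟨hcmono i, hcconj i⟩
  · have hieq : i = K := by omega
    subst hieq
    simp only [if_pos le_rfl, if_neg hiK, hcK]
    constructor
    · exact inf_le_right
    · intro h hh a ha
      exact hQ'norm h hh a ha

end Reverse

theorem stmt_17 [Fintype G] {p : ℕ} (hp : p.Prime)
    (x : G) (hx : ∃ k : ℕ, orderOf x = p ^ k) :
    subnormalizer x =
      ⨆ (Q : Subgroup G) (_ : IsRadicalPSubgroup p Q ∧ x ∈ Q), Subgroup.normalizer (Q : Set G) := by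
  obtain ⟨k, hk⟩ := hx
  have hxp : IsPGroup p (Subgroup.zpowers x) :=
    IsPGroup.of_card (by rw [Nat.card_zpowers, hk])
  apply le_antisymm
  · rw [subnormalizer, Subgroup.closure_le]
    intro g hg
    simp only [Set.mem_setOf_eq] at hg
    have hxOp : x ∈ OpC p (Subgroup.closure {g, x}) := mem_OpC_of_subnormal hxp hg
    have hgH : g ∈ Subgroup.closure ({g, x} : Set G) := Subgroup.subset_closure (by simp)
    have hgN : g ∈ Subgroup.normalizer (OpC p (Subgroup.closure ({g, x} : Set G)) : Set G) :=
      le_normalizer_of_conj' (fun h hh m hm => OpC_conj_self hh hm) hgH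
    obtain ⟨R, hR, hxR, hle⟩ := exists_radical_aux (x := x) (Nat.card G)
      (OpC p (Subgroup.closure {g, x}))
      (by have := Nat.card_pos (α := OpC p (Subgroup.closure ({g, x} : Set G))); omega)
      OpC_isPGroup hxOp
    have hgR : g ∈ Subgroup.normalizer (R : Set G) := hle hgN
    have hfin : Subgroup.normalizer (R : Set G) ≤
        ⨆ (Q : Subgroup G) (_ : IsRadicalPSubgroup p Q ∧ x ∈ Q), Subgroup.normalizer (Q : Set G) :=
      le_iSup₂ (f := fun (Q : Subgroup G) (_ : IsRadicalPSubgroup p Q ∧ x ∈ Q) => Subgroup.normalizer (Q : Set G))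
        R ⟨hR, hxR⟩
    exact hfin hgR
  · refine iSup_le fun Q => iSup_le fun hQ => ?_
    intro g hg
    exact Subgroup.subset_closure (subnormal_of_mem_normalizer hp hQ.1.1 hQ.2 hg)
end
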